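/- arXiv:1010.0492 — 6 statements merged into one kernel-verified Lean document; each statement's English description precedes it below -/
import Mathlib

section
/- If W is frame indifferent, i.e. W(RF) = W(F) for every R ∈ SO(3) and every F ∈ M^{3×3}, and W is differentiable at F ∈ M^{3×3} with det F > 0, then the matrix DW(F)·Fᵀ is symmetric, i.e. DW(F)Fᵀ = F (DW(F))ᵀ. -/
open Matrix

attribute [local instance] Matrix.normedAddCommGroup Matrix.normedSpace

/-- The rotation group SO(3). -/
def SO3 : Set (Matrix (Fin 3) (Fin 3) ℝ) := {R | R * Rᵀ = 1 ∧ R.det = 1}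

/-- The gradient of `W` at `F`, identified with a 3×3 matrix. -/
noncomputable def DW (W : Matrix (Fin 3) (Fin 3) ℝ → ℝ) (F : Matrix (Fin 3) (Fin 3) ℝ) :
    Matrix (Fin 3) (Fin 3) ℝ :=
  Matrix.of fun i j => fderiv ℝ W F (Matrix.single i j 1)

private lemma clm_apply' (L : Matrix (Fin 3) (Fin 3) ℝ →L[ℝ] ℝ) (M : Matrix (Fin 3) (Fin 3) ℝ) :
    L M = ∑ i, ∑ j, M i j * L (Matrix.single i j 1) := by
  conv_lhs => rw [Matrix.matrix_eq_sum_single M]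
  rw [map_sum]
  refine Finset.sum_congr rfl fun i _ => ?_
  rw [map_sum]
  refine Finset.sum_congr rfl fun j _ => ?_
  have h : Matrix.single i j (M i j) = M i j • Matrix.single i j 1 := by
    rw [Matrix.smul_single, smul_eq_mul, mul_one]
  rw [h, _root_.map_smul, smul_eq_mul]

private lemma key (W : Matrix (Fin 3) (Fin 3) ℝ → ℝ)
    (hframe : ∀ R ∈ SO3, ∀ F, W (R * F) = W F)
    (F : Matrix (Fin 3) (Fin 3) ℝ)
    (hdiff : DifferentiableAt ℝ W F)
    (A P Q : Matrix (Fin 3) (Fin 3) ℝ)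
    (hPQ : P + Q = 1)
    (hSO : ∀ t : ℝ, (Real.cos t • P + Real.sin t • A + Q) ∈ SO3) :
    fderiv ℝ W F (A * F) = 0 := by
  set g : ℝ → Matrix (Fin 3) (Fin 3) ℝ :=
    fun t => Real.cos t • (P * F) + Real.sin t • (A * F) + Q * F with hg
  have hg0 : g 0 = F := by
    simp only [hg, Real.cos_zero, Real.sin_zero, one_smul, zero_smul, zero_add, add_zero]
    rw [← Matrix.add_mul, hPQ, Matrix.one_mul]
  have hgd : HasDerivAt g (A * F) 0 := by
    have h1 : HasDerivAt (fun t : ℝ => Real.cos t • (P * F)) ((-Real.sin 0) • (P * F)) 0 :=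
      (Real.hasDerivAt_cos 0).smul_const _
    have h2 : HasDerivAt (fun t : ℝ => Real.sin t • (A * F)) ((Real.cos 0) • (A * F)) 0 :=
      (Real.hasDerivAt_sin 0).smul_const _
    have := (h1.add h2).add_const (Q * F)
    simp only [Real.sin_zero, Real.cos_zero, neg_zero, zero_smul, one_smul, zero_add] at this; exact this
  have hconst : (fun t => W (g t)) = fun _ => W F := by
    funext t
    have : g t = (Real.cos t • P + Real.sin t • A + Q) * F := by
      simp [hg, Matrix.add_mul, Matrix.smul_mul]
    rw [this, hframe _ (hSO t) F]
  have hcomp : HasDerivAt (fun t => W (g t)) (fderiv ℝ W F (A * F)) 0 := by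
    have hF : HasFDerivAt W (fderiv ℝ W F) (g 0) := by rw [hg0]; exact hdiff.hasFDerivAt
    exact hF.comp_hasDerivAt 0 hgd
  have h1 : HasDerivAt (fun _ : ℝ => W F) (fderiv ℝ W F (A * F)) 0 := hconst ▸ hcomp
  have h0 : HasDerivAt (fun _ : ℝ => W F) 0 0 := hasDerivAt_const 0 _
  exact h1.unique h0

private lemma transpose_fin3 (a b c d e f g h i : ℝ) :
    (!![a,b,c;d,e,f;g,h,i])ᵀ = !![a,d,g;b,e,h;c,f,i] := by
  ext x y; fin_cases x <;> fin_cases y <;> simp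

private lemma so3_mem (a b c d e f g h i : ℝ)
    (h1 : a^2+b^2+c^2 = 1) (h2 : d^2+e^2+f^2 = 1) (h3 : g^2+h^2+i^2 = 1)
    (h4 : a*d+b*e+c*f = 0) (h5 : a*g+b*h+c*i = 0) (h6 : d*g+e*h+f*i = 0)
    (hdet : a*(e*i-f*h) - b*(d*i-f*g) + c*(d*h-e*g) = 1) :
    !![a,b,c;d,e,f;g,h,i] ∈ SO3 := by
  constructor
  · rw [transpose_fin3, Matrix.mul_fin_three]
    ext x y; fin_cases x <;> fin_cases y <;>
      simp [Matrix.one_apply] <;>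
      first
        | linear_combination h1 | linear_combination h2 | linear_combination h3
        | linear_combination h4 | linear_combination h5 | linear_combination h6
  · rw [Matrix.det_fin_three]; simp; linear_combination hdet

private lemma so3_z (t : ℝ) :
    (Real.cos t • (!![1,0,0;0,1,0;0,0,0] : Matrix (Fin 3) (Fin 3) ℝ)
      + Real.sin t • !![0,-1,0;1,0,0;0,0,0] + !![0,0,0;0,0,0;0,0,1]) ∈ SO3 := by
  have hR : (Real.cos t • (!![1,0,0;0,1,0;0,0,0] : Matrix (Fin 3) (Fin 3) ℝ)
      + Real.sin t • !![0,-1,0;1,0,0;0,0,0] + !![0,0,0;0,0,0;0,0,1])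
      = !![Real.cos t, -Real.sin t, 0; Real.sin t, Real.cos t, 0; 0,0,1] := by
    ext x y; fin_cases x <;> fin_cases y <;> simp [Matrix.vecHead, Matrix.vecTail]
  rw [hR]
  have hs := Real.sin_sq_add_cos_sq t
  apply so3_mem <;> nlinarith [hs]

private lemma so3_y (t : ℝ) :
    (Real.cos t • (!![1,0,0;0,0,0;0,0,1] : Matrix (Fin 3) (Fin 3) ℝ)
      + Real.sin t • !![0,0,-1;0,0,0;1,0,0] + !![0,0,0;0,1,0;0,0,0]) ∈ SO3 := by
  have hR : (Real.cos t • (!![1,0,0;0,0,0;0,0,1] : Matrix (Fin 3) (Fin 3) ℝ)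
      + Real.sin t • !![0,0,-1;0,0,0;1,0,0] + !![0,0,0;0,1,0;0,0,0])
      = !![Real.cos t, 0, -Real.sin t; 0, 1, 0; Real.sin t, 0, Real.cos t] := by
    ext x y; fin_cases x <;> fin_cases y <;> simp [Matrix.vecHead, Matrix.vecTail]
  rw [hR]
  have hs := Real.sin_sq_add_cos_sq t
  apply so3_mem <;> nlinarith [hs]

private lemma so3_x (t : ℝ) :
    (Real.cos t • (!![0,0,0;0,1,0;0,0,1] : Matrix (Fin 3) (Fin 3) ℝ)
      + Real.sin t • !![0,0,0;0,0,-1;0,1,0] + !![1,0,0;0,0,0;0,0,0]) ∈ SO3 := by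
  have hR : (Real.cos t • (!![0,0,0;0,1,0;0,0,1] : Matrix (Fin 3) (Fin 3) ℝ)
      + Real.sin t • !![0,0,0;0,0,-1;0,1,0] + !![1,0,0;0,0,0;0,0,0])
      = !![1, 0, 0; 0, Real.cos t, -Real.sin t; 0, Real.sin t, Real.cos t] := by
    ext x y; fin_cases x <;> fin_cases y <;> simp [Matrix.vecHead, Matrix.vecTail]
  rw [hR]
  have hs := Real.sin_sq_add_cos_sq t
  apply so3_mem <;> nlinarith [hs]

/-- If `W` is frame indifferent and differentiable at `F` with `det F > 0`, then the
matrix `DW(F) Fᵀ` is symmetric: `DW(F) Fᵀ = F (DW(F))ᵀ`. -/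
theorem frame_indifference_symmetric_stress
    (W : Matrix (Fin 3) (Fin 3) ℝ → ℝ)
    (hframe : ∀ R ∈ SO3, ∀ F, W (R * F) = W F)
    (F : Matrix (Fin 3) (Fin 3) ℝ)
    (hdet : 0 < F.det)
    (hdiff : DifferentiableAt ℝ W F) :
    DW W F * Fᵀ = F * (DW W F)ᵀ := by
  have expand : ∀ M : Matrix (Fin 3) (Fin 3) ℝ,
      fderiv ℝ W F M = ∑ i, ∑ j, M i j * DW W F i j := fun M => clm_apply' _ M
  have hPQz : (!![1,0,0;0,1,0;0,0,0] : Matrix (Fin 3) (Fin 3) ℝ) + !![0,0,0;0,0,0;0,0,1] = 1 := by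
    ext x y; fin_cases x <;> fin_cases y <;> simp [Matrix.one_apply, Matrix.vecHead, Matrix.vecTail]
  have hPQy : (!![1,0,0;0,0,0;0,0,1] : Matrix (Fin 3) (Fin 3) ℝ) + !![0,0,0;0,1,0;0,0,0] = 1 := by
    ext x y; fin_cases x <;> fin_cases y <;> simp [Matrix.one_apply, Matrix.vecHead, Matrix.vecTail]
  have hPQx : (!![0,0,0;0,1,0;0,0,1] : Matrix (Fin 3) (Fin 3) ℝ) + !![1,0,0;0,0,0;0,0,0] = 1 := by
    ext x y; fin_cases x <;> fin_cases y <;> simp [Matrix.one_apply, Matrix.vecHead, Matrix.vecTail]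
  have e1 : fderiv ℝ W F (!![0,-1,0;1,0,0;0,0,0] * F) = 0 :=
    key W hframe F hdiff _ _ _ hPQz so3_z
  have e2 : fderiv ℝ W F (!![0,0,-1;0,0,0;1,0,0] * F) = 0 :=
    key W hframe F hdiff _ _ _ hPQy so3_y
  have e3 : fderiv ℝ W F (!![0,0,0;0,0,-1;0,1,0] * F) = 0 :=
    key W hframe F hdiff _ _ _ hPQx so3_x
  rw [expand] at e1 e2 e3
  simp [Matrix.mul_apply, Fin.sum_univ_three, Matrix.vecHead, Matrix.vecTail] at e1 e2 e3
  have key : ∀ i j : Fin 3, (DW W F * Fᵀ) i j = (F * (DW W F)ᵀ) i j := by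
    have h01 : (DW W F * Fᵀ) 0 1 = (F * (DW W F)ᵀ) 0 1 := by
      simp [Matrix.mul_apply, Fin.sum_univ_three]; linear_combination -e1
    have h10 : (DW W F * Fᵀ) 1 0 = (F * (DW W F)ᵀ) 1 0 := by
      simp [Matrix.mul_apply, Fin.sum_univ_three]; linear_combination e1
    have h02 : (DW W F * Fᵀ) 0 2 = (F * (DW W F)ᵀ) 0 2 := by
      simp [Matrix.mul_apply, Fin.sum_univ_three]; linear_combination -e2
    have h20 : (DW W F * Fᵀ) 2 0 = (F * (DW W F)ᵀ) 2 0 := by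
      simp [Matrix.mul_apply, Fin.sum_univ_three]; linear_combination e2
    have h12 : (DW W F * Fᵀ) 1 2 = (F * (DW W F)ᵀ) 1 2 := by
      simp [Matrix.mul_apply, Fin.sum_univ_three]; linear_combination -e3
    have h21 : (DW W F * Fᵀ) 2 1 = (F * (DW W F)ᵀ) 2 1 := by
      simp [Matrix.mul_apply, Fin.sum_univ_three]; linear_combination e3
    have hd : ∀ i : Fin 3, (DW W F * Fᵀ) i i = (F * (DW W F)ᵀ) i i := by
      intro i; simp [Matrix.mul_apply]; exact Finset.sum_congr rfl fun k _ => mul_comm _ _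
    intro i j
    fin_cases i <;> fin_cases j <;>
      first
        | exact hd 0 | exact hd 1 | exact hd 2
        | exact h01 | exact h02 | exact h10 | exact h12 | exact h20 | exact h21
  exact Matrix.ext key
end

section
/- Suppose W : M^{3×3} → [0,+∞] satisfies: W is C² in a δ-neighbourhood of SO(3) with D²W bounded there, W = 0 on SO(3) and DW(Id) = 0, and there exists k > 0 with |DW(F)Fᵀ| ≤ k(W(F)+1) for every F with det F > 0. Fix α > 2 and h ∈ (0,1). If G ∈ M^{3×3} is such that det(Id + h^{α-1}G) > 0, and E := h^{-(α-1)} DW(Id + h^{α-1}G)(Id + h^{α-1}G)ᵀ, then there is a constant C (depending only on W, δ, k) such that |E| ≤ C( h^{-(α-1)} W(Id + h^{α-1}G) + |G| ). -/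
open Matrix

attribute [local instance] Matrix.normedAddCommGroup Matrix.normedSpace

namespace ScaledStressAux

abbrev M3 := Matrix (Fin 3) (Fin 3) ℝ

lemma mul_norm_le (A B : M3) : ‖A * B‖ ≤ 3 * ‖A‖ * ‖B‖ := by
  rw [Matrix.norm_le_iff (by positivity)]
  intro i j
  calc ‖(A * B) i j‖ = ‖∑ l, A i l * B l j‖ := by rw [Matrix.mul_apply]
    _ ≤ ∑ l, ‖A i l * B l j‖ := norm_sum_le _ _
    _ ≤ ∑ _l : Fin 3, ‖A‖ * ‖B‖ := by
        refine Finset.sum_le_sum fun l _ => ?_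
        rw [norm_mul]
        exact mul_le_mul (Matrix.norm_entry_le_entrywise_sup_norm A)
          (Matrix.norm_entry_le_entrywise_sup_norm B) (norm_nonneg _) (norm_nonneg _)
    _ = 3 * ‖A‖ * ‖B‖ := by simp [Finset.sum_const]; ring

lemma stdBasis_norm_le (i j : Fin 3) : ‖(Matrix.single i j (1:ℝ) : M3)‖ ≤ 1 := by
  rw [Matrix.norm_le_iff (by norm_num)]
  intro a b
  by_cases hab : i = a ∧ j = b
  · simp [Matrix.single, hab.1, hab.2]
  · rw [Matrix.single_apply_of_ne (h := by tauto)]; norm_num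

lemma one_norm_le : ‖(1 : M3)‖ ≤ 1 := by
  rw [Matrix.norm_le_iff (by norm_num)]
  intro a b
  rw [Matrix.one_apply]
  split <;> norm_num

noncomputable def opn {E F : Type} [NormedAddCommGroup E] [NormedSpace ℝ E]
    [NormedAddCommGroup F] [NormedSpace ℝ F] (f : E →L[ℝ] F) : ℝ := ‖f‖

noncomputable def opn2 {E : Type} [NormedAddCommGroup E] [NormedSpace ℝ E]
    (f : E →L[ℝ] E →L[ℝ] ℝ) : ℝ := ‖f‖

lemma DW_norm_le (W : M3 → ℝ) (F : M3) : ‖DW W F‖ ≤ opn (fderiv ℝ W F) := by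
  rw [Matrix.norm_le_iff (r := opn (fderiv ℝ W F)) (by unfold opn; exact norm_nonneg _)]
  intro i j
  calc ‖DW W F i j‖ = ‖fderiv ℝ W F (Matrix.single i j 1)‖ := rfl
    _ ≤ opn (fderiv ℝ W F) * ‖(Matrix.single i j (1:ℝ) : M3)‖ :=
        ContinuousLinearMap.le_opNorm _ _
    _ ≤ opn (fderiv ℝ W F) * 1 :=
        mul_le_mul_of_nonneg_left (stdBasis_norm_le i j) (norm_nonneg _)
    _ = opn (fderiv ℝ W F) := mul_one _

lemma fderiv2_norm_le {E : Type} [NormedAddCommGroup E] [NormedSpace ℝ E] (f : E → ℝ) (x : E) :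
    ‖fderiv ℝ (fderiv ℝ f) x‖ ≤ ‖iteratedFDeriv ℝ 2 f x‖ := by
  rw [show (2 : ℕ) = 1 + 1 from rfl, ← norm_iteratedFDeriv_fderiv]
  refine ContinuousLinearMap.opNorm_le_bound _ (norm_nonneg _) fun v => ?_
  have hv : fderiv ℝ (fderiv ℝ f) x v = iteratedFDeriv ℝ 1 (fderiv ℝ f) x ![v] := by
    rw [iteratedFDeriv_one_apply]; simp
  rw [hv]
  calc ‖iteratedFDeriv ℝ 1 (fderiv ℝ f) x ![v]‖
      ≤ ‖iteratedFDeriv ℝ 1 (fderiv ℝ f) x‖ * ∏ i, ‖(![v]) i‖ :=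
        ContinuousMultilinearMap.le_opNorm _ _
    _ = ‖iteratedFDeriv ℝ 1 (fderiv ℝ f) x‖ * ‖v‖ := by simp

end ScaledStressAux

open ScaledStressAux in
/-- Pointwise estimate on the scaled stress: if `W` is `C²` with bounded second
differential near `SO(3)`, vanishes on `SO(3)` with `DW(Id) = 0`, and satisfies the
growth condition `|DW(F)Fᵀ| ≤ k(W(F)+1)` for `det F > 0`, then the scaled stress
`E = h^{-(α-1)} DW(Id + h^{α-1}G)(Id + h^{α-1}G)ᵀ` satisfies
`|E| ≤ C (h^{-(α-1)} W(Id + h^{α-1}G) + |G|)` with `C` depending only on `W`, `δ`, `k`. -/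
theorem scaled_stress_estimate
    (W : Matrix (Fin 3) (Fin 3) ℝ → ℝ)
    (hWnonneg : ∀ F, 0 ≤ W F)
    (δ k K : ℝ) (hδ : 0 < δ) (hk : 0 < k)
    (hC2 : ContDiffOn ℝ 2 W {F | Metric.infDist F SO3 < δ})
    (hD2bd : ∀ F ∈ {F : Matrix (Fin 3) (Fin 3) ℝ | Metric.infDist F SO3 < δ},
      ‖iteratedFDeriv ℝ 2 W F‖ ≤ K)
    (hzero : ∀ R ∈ SO3, W R = 0)
    (hDWid : fderiv ℝ W (1 : Matrix (Fin 3) (Fin 3) ℝ) = 0)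
    (hH7 : ∀ F : Matrix (Fin 3) (Fin 3) ℝ, 0 < F.det → ‖DW W F * Fᵀ‖ ≤ k * (W F + 1)) :
    ∃ C : ℝ, 0 < C ∧ ∀ α : ℝ, 2 < α → ∀ h : ℝ, h ∈ Set.Ioo (0 : ℝ) 1 →
      ∀ G : Matrix (Fin 3) (Fin 3) ℝ,
        0 < (1 + h ^ (α - 1) • G).det →
        ‖(h ^ (α - 1))⁻¹ •
            (DW W (1 + h ^ (α - 1) • G) * (1 + h ^ (α - 1) • G)ᵀ)‖ ≤
          C * ((h ^ (α - 1))⁻¹ * W (1 + h ^ (α - 1) • G) + ‖G‖) := by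
  have h1SO3 : (1 : M3) ∈ SO3 := ⟨by simp, by simp⟩
  have h1U : (1 : M3) ∈ {F : M3 | Metric.infDist F SO3 < δ} := by
    simpa [Metric.infDist_zero_of_mem h1SO3] using hδ
  have hK0 : (0 : ℝ) ≤ K := le_trans (norm_nonneg _) (hD2bd 1 h1U)
  have hUopen : IsOpen {F : M3 | Metric.infDist F SO3 < δ} :=
    isOpen_lt (Metric.continuous_infDist_pt SO3) continuous_const
  have hsub : Metric.ball (1 : M3) δ ⊆ {F : M3 | Metric.infDist F SO3 < δ} := by
    intro x hx
    exact lt_of_le_of_lt (Metric.infDist_le_dist_of_mem h1SO3) hx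
  refine ⟨k + 2 * k / δ + 3 * K * (1 + δ / 2) + 1, by positivity, ?_⟩
  intro α hα h hh G hdet
  set t : ℝ := h ^ (α - 1) with htdef
  have ht : 0 < t := Real.rpow_pos_of_pos hh.1 _
  set F : M3 := 1 + t • G with hFdef
  set C : ℝ := k + 2 * k / δ + 3 * K * (1 + δ / 2) + 1 with hCdef
  have hC1 : k ≤ C := by
    have : 0 ≤ 2 * k / δ := by positivity
    have : 0 ≤ 3 * K * (1 + δ / 2) := by positivity
    simp only [hCdef]; linarith [mul_nonneg (by positivity : (0:ℝ) ≤ 2 * k) (le_of_lt hδ)]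
  have hLHS : ‖t⁻¹ • (DW W F * Fᵀ)‖ = t⁻¹ * ‖DW W F * Fᵀ‖ := by
    rw [norm_smul, Real.norm_eq_abs, abs_of_pos (inv_pos.mpr ht)]
  have hWF : 0 ≤ W F := hWnonneg F
  by_cases hcase : t * ‖G‖ ≤ δ / 2
  · -- small case: Taylor expansion
    have hFnorm : ‖F - 1‖ = t * ‖G‖ := by
      simp [hFdef, norm_smul, Real.norm_eq_abs, abs_of_pos ht]
    have hFmem : F ∈ Metric.ball (1 : M3) δ := by
      rw [Metric.mem_ball, dist_eq_norm, hFnorm]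
      linarith
    have hdiff : ∀ x ∈ Metric.ball (1 : M3) δ, DifferentiableAt ℝ (fderiv ℝ W) x := by
      intro x hx
      have hx2 : ContDiffAt ℝ 2 W x := hC2.contDiffAt (hUopen.mem_nhds (hsub hx))
      exact (hx2.fderiv_right (m := 1) (by norm_num)).differentiableAt one_ne_zero
    have hbd : ∀ x ∈ Metric.ball (1 : M3) δ, opn2 (fderiv ℝ (fderiv ℝ W) x) ≤ K := fun x hx =>
      le_trans (fderiv2_norm_le W x) (hD2bd x (hsub hx))
    have hmv : opn (fderiv ℝ W F - fderiv ℝ W 1) ≤ K * ‖F - 1‖ :=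
      (convex_ball (1 : M3) δ).norm_image_sub_le_of_norm_fderiv_le hdiff hbd
        (Metric.mem_ball_self hδ) hFmem
    have hfd : opn (fderiv ℝ W F) ≤ K * (t * ‖G‖) := by
      rw [hDWid, sub_zero] at hmv
      rwa [hFnorm] at hmv
    have hFt : ‖Fᵀ‖ ≤ 1 + δ / 2 := by
      rw [Matrix.norm_transpose]
      calc ‖F‖ ≤ ‖(1 : M3)‖ + ‖t • G‖ := norm_add_le _ _
        _ ≤ 1 + δ / 2 := by
            rw [norm_smul, Real.norm_eq_abs, abs_of_pos ht]
            exact add_le_add one_norm_le hcase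
    have hprod : ‖DW W F * Fᵀ‖ ≤ 3 * (K * (t * ‖G‖)) * (1 + δ / 2) := by
      calc ‖DW W F * Fᵀ‖ ≤ 3 * ‖DW W F‖ * ‖Fᵀ‖ := mul_norm_le _ _
        _ ≤ 3 * (K * (t * ‖G‖)) * (1 + δ / 2) := by
            apply mul_le_mul _ hFt (norm_nonneg _) (by positivity)
            have := le_trans (DW_norm_le W F) hfd
            nlinarith [norm_nonneg (DW W F)]
    rw [hLHS]
    have hmain : t⁻¹ * ‖DW W F * Fᵀ‖ ≤ 3 * K * (1 + δ / 2) * ‖G‖ := by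
      calc t⁻¹ * ‖DW W F * Fᵀ‖ ≤ t⁻¹ * (3 * (K * (t * ‖G‖)) * (1 + δ / 2)) :=
            mul_le_mul_of_nonneg_left hprod (le_of_lt (inv_pos.mpr ht))
        _ = (t⁻¹ * t) * (3 * K * (1 + δ / 2) * ‖G‖) := by ring
        _ = 3 * K * (1 + δ / 2) * ‖G‖ := by rw [inv_mul_cancel₀ (ne_of_gt ht), one_mul]
    have hG0 : 0 ≤ ‖G‖ := norm_nonneg _
    have ht' : 0 ≤ t⁻¹ * W F := mul_nonneg (le_of_lt (inv_pos.mpr ht)) hWF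
    have hCge : 3 * K * (1 + δ / 2) ≤ C := by
      simp only [hCdef]
      have h1 : 0 < k := hk
      have h2 : 0 ≤ 2 * k / δ := by positivity
      linarith
    calc t⁻¹ * ‖DW W F * Fᵀ‖ ≤ 3 * K * (1 + δ / 2) * ‖G‖ := hmain
      _ ≤ C * ‖G‖ := mul_le_mul_of_nonneg_right hCge hG0
      _ ≤ C * (t⁻¹ * W F + ‖G‖) := by
          have hC0 : 0 < C := by simp only [hCdef]; positivity
          have hnn : 0 ≤ C * (t⁻¹ * W F) := mul_nonneg hC0.le ht'
          rw [mul_add]; linarith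
  · -- large case: growth condition
    push_neg at hcase
    have hH := hH7 F hdet
    rw [hLHS]
    have htinv : k * t⁻¹ ≤ 2 * k / δ * ‖G‖ := by
      have h1 : t⁻¹ * (δ / 2) < t⁻¹ * (t * ‖G‖) :=
        mul_lt_mul_of_pos_left hcase (inv_pos.mpr ht)
      rw [← mul_assoc, inv_mul_cancel₀ (ne_of_gt ht), one_mul] at h1
      have h2 : t⁻¹ * (δ / 2) ≤ ‖G‖ := le_of_lt h1
      have h3 : 0 < t⁻¹ := inv_pos.mpr ht
      rw [div_mul_eq_mul_div, le_div_iff₀ hδ]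
      have h4 := mul_le_mul_of_nonneg_left h2 (by positivity : (0:ℝ) ≤ 2 * k)
      calc k * t⁻¹ * δ = 2 * k * (t⁻¹ * (δ / 2)) := by ring
        _ ≤ 2 * k * ‖G‖ := h4
    have hC0 : 0 < C := by simp only [hCdef]; positivity
    calc t⁻¹ * ‖DW W F * Fᵀ‖ ≤ t⁻¹ * (k * (W F + 1)) :=
          mul_le_mul_of_nonneg_left hH (le_of_lt (inv_pos.mpr ht))
      _ = k * (t⁻¹ * W F) + k * t⁻¹ := by ring
      _ ≤ C * (t⁻¹ * W F) + 2 * k / δ * ‖G‖ := by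
          refine add_le_add ?_ htinv
          exact mul_le_mul_of_nonneg_right hC1
            (mul_nonneg (le_of_lt (inv_pos.mpr ht)) hWF)
      _ ≤ C * (t⁻¹ * W F + ‖G‖) := by
          have hCge : 2 * k / δ ≤ C := by
            simp only [hCdef]
            have : 0 ≤ 3 * K * (1 + δ / 2) := by positivity
            linarith
          have hG0 : 0 ≤ ‖G‖ := norm_nonneg _
          rw [mul_add]
          exact add_le_add le_rfl (mul_le_mul_of_nonneg_right hCge hG0)
end

section
/- Let L > 0, 𝔼 > 0, and let Q₁ be a positive definite quadratic form on skew-symmetric 3×3 matrices. For f₂, f₃ ∈ L²(0,L), define on H = W^{1,2}(0,L) × W^{2,2}(0,L) × W^{2,2}(0,L) × W^{1,2}(0,L) the von Kármán rod functional 𝒥₃(u,v₂,v₃,w) := ½∫₀^L 𝔼 (u' + ½[(v₂')²+(v₃')²])² dx₁ + ½∫₀^L Q₁(A') dx₁ − ∫₀^L (f₂v₂ + f₃v₃) dx₁ on the class 𝒜 := {(u,v₂,v₃,w) ∈ H : u(0)=v₂(0)=v₂'(0)=v₃(0)=v₃'(0)=w(0)=0}, where A is the skew-symmetric matrix field with A₂₁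 = v₂', A₃₁ = v₃', A₃₂ = w. Then 𝒥₃ has at most one stationary point on 𝒜, and this stationary point (when it exists) is a global minimum point. -/
open Matrix MeasureTheory intervalIntegral

/-- A point of the space `H = W^{1,2} × W^{2,2} × W^{2,2} × W^{1,2}`, represented by
four real functions. -/
structure RodPt where
  u : ℝ → ℝ
  v2 : ℝ → ℝ
  v3 : ℝ → ℝ
  w : ℝ → ℝ

/-- The skew-symmetric matrix `A'` with `A'₂₁ = a`, `A'₃₁ = b`, `A'₃₂ = c`. -/
def Amat (a b c : ℝ) : Matrix (Fin 3) (Fin 3) ℝ :=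
  !![0, -a, -b; a, 0, -c; b, c, 0]

/-- The von Kármán rod functional `𝒥₃`. -/
noncomputable def Jfun (L EE : ℝ) (Q1 : QuadraticForm ℝ (Matrix (Fin 3) (Fin 3) ℝ))
    (f2 f3 : ℝ → ℝ) (p : RodPt) : ℝ :=
  (1 / 2) * ∫ x in (0 : ℝ)..L,
      (EE * (deriv p.u x + ((deriv p.v2 x) ^ 2 + (deriv p.v3 x) ^ 2) / 2) ^ 2 +
        Q1 (Amat (deriv (deriv p.v2) x) (deriv (deriv p.v3) x) (deriv p.w x))) -
    ∫ x in (0 : ℝ)..L, (f2 x * p.v2 x + f3 x * p.v3 x)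

/-- The admissible class `𝒜`: regularity plus zero boundary conditions at `0`. -/
def Adm (p : RodPt) : Prop :=
  ContDiff ℝ 1 p.u ∧ ContDiff ℝ 2 p.v2 ∧ ContDiff ℝ 2 p.v3 ∧ ContDiff ℝ 1 p.w ∧
    p.u 0 = 0 ∧ p.v2 0 = 0 ∧ deriv p.v2 0 = 0 ∧ p.v3 0 = 0 ∧ deriv p.v3 0 = 0 ∧ p.w 0 = 0

/-- The point `p + t q`. -/
def addRod (p q : RodPt) (t : ℝ) : RodPt :=
  ⟨fun x => p.u x + t * q.u x, fun x => p.v2 x + t * q.v2 x,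
    fun x => p.v3 x + t * q.v3 x, fun x => p.w x + t * q.w x⟩

/-- `p` is a stationary point of `𝒥₃` on `𝒜`: the Gâteaux derivative of `𝒥₃` at `p`
vanishes along every admissible variation. -/
def Stationary (L EE : ℝ) (Q1 : QuadraticForm ℝ (Matrix (Fin 3) (Fin 3) ℝ))
    (f2 f3 : ℝ → ℝ) (p : RodPt) : Prop :=
  Adm p ∧ ∀ q : RodPt, Adm q →
    HasDerivAt (fun t : ℝ => Jfun L EE Q1 f2 f3 (addRod p q t)) 0 0


namespace VKaux

open Set QuadraticMap

lemma Amat_add_smul (a b c a' b' c' t : ℝ) :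
    Amat (a + t * a') (b + t * b') (c + t * c') = Amat a b c + t • Amat a' b' c' := by
  unfold Amat
  ext i j
  fin_cases i <;> fin_cases j <;>
    simp [Matrix.add_apply, Matrix.smul_apply, smul_eq_mul] <;> ring

lemma Amat_transpose (a b c : ℝ) : (Amat a b c)ᵀ = -(Amat a b c) := by
  unfold Amat
  ext i j
  fin_cases i <;> fin_cases j <;> simp [Matrix.transpose_apply, Matrix.neg_apply]

lemma Amat_zero : Amat 0 0 0 = 0 := by
  unfold Amat
  ext i j
  fin_cases i <;> fin_cases j <;>
    simp [Matrix.zero_apply, Matrix.vecHead, Matrix.vecTail]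

lemma Amat_eq_zero_iff {a b c : ℝ} : Amat a b c = 0 ↔ a = 0 ∧ b = 0 ∧ c = 0 := by
  constructor
  · intro h
    have h1 := congrFun (congrFun h 1) 0
    have h2 := congrFun (congrFun h 2) 0
    have h3 := congrFun (congrFun h 2) 1
    simp [Amat] at h1 h2 h3
    exact ⟨h1, h2, h3⟩
  · rintro ⟨rfl, rfl, rfl⟩
    exact Amat_zero

lemma Q_add_smul (Q : QuadraticForm ℝ (Matrix (Fin 3) (Fin 3) ℝ))
    (x y : Matrix (Fin 3) (Fin 3) ℝ) (t : ℝ) :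
    Q (x + t • y) = Q x + t * polar Q x y + t ^ 2 * Q y := by
  have h : Q (x + t • y) = Q x + Q (t • y) + polar Q x (t • y) := by
    rw [QuadraticMap.polar]; ring
  rw [h, QuadraticMap.map_smul, polar_smul_right, smul_eq_mul, smul_eq_mul]
  ring

lemma Amat_add (a b c a' b' c' : ℝ) :
    Amat (a + a') (b + b') (c + c') = Amat a b c + Amat a' b' c' := by
  have := Amat_add_smul a b c a' b' c' 1
  simpa using this

lemma Amat_smul (a b c t : ℝ) : Amat (t * a) (t * b) (t * c) = t • Amat a b c := by
  have := Amat_add_smul 0 0 0 a b c t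
  simpa [Amat_zero] using this

lemma Q_Amat_poly (Q : QuadraticForm ℝ (Matrix (Fin 3) (Fin 3) ℝ)) (a b c : ℝ) :
    Q (Amat a b c) = a ^ 2 * Q (Amat 1 0 0) + b ^ 2 * Q (Amat 0 1 0) + c ^ 2 * Q (Amat 0 0 1)
      + a * b * polar Q (Amat 1 0 0) (Amat 0 1 0)
      + a * c * polar Q (Amat 1 0 0) (Amat 0 0 1)
      + b * c * polar Q (Amat 0 1 0) (Amat 0 0 1) := by
  have h1 : Amat a b c = Amat a 0 0 + Amat 0 b c := by
    rw [← Amat_add]; norm_num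
  have h2 : Amat 0 b c = Amat 0 b 0 + Amat 0 0 c := by
    rw [← Amat_add]; norm_num
  have e1 : Amat a 0 0 = a • Amat 1 0 0 := by rw [← Amat_smul]; norm_num
  have e2 : Amat 0 b 0 = b • Amat 0 1 0 := by rw [← Amat_smul]; norm_num
  have e3 : Amat 0 0 c = c • Amat 0 0 1 := by rw [← Amat_smul]; norm_num
  have expand : ∀ x y : Matrix (Fin 3) (Fin 3) ℝ, Q (x + y) = Q x + Q y + polar Q x y := by
    intro x y; rw [QuadraticMap.polar]; ring
  rw [h1, expand, h2, expand, QuadraticMap.polar_add_right, e1, e2, e3,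
    QuadraticMap.map_smul, QuadraticMap.map_smul, QuadraticMap.map_smul,
    polar_smul_left, polar_smul_right, polar_smul_left, polar_smul_right,
    polar_smul_left, polar_smul_right]
  simp only [smul_eq_mul]
  ring

lemma cont_Q_Amat (Q : QuadraticForm ℝ (Matrix (Fin 3) (Fin 3) ℝ)) {a b c : ℝ → ℝ}
    (ha : Continuous a) (hb : Continuous b) (hc : Continuous c) :
    Continuous fun x => Q (Amat (a x) (b x) (c x)) := by
  have heq : (fun x => Q (Amat (a x) (b x) (c x))) = fun x =>
      (a x) ^ 2 * Q (Amat 1 0 0) + (b x) ^ 2 * Q (Amat 0 1 0) + (c x) ^ 2 * Q (Amat 0 0 1)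
      + (a x) * (b x) * polar Q (Amat 1 0 0) (Amat 0 1 0)
      + (a x) * (c x) * polar Q (Amat 1 0 0) (Amat 0 0 1)
      + (b x) * (c x) * polar Q (Amat 0 1 0) (Amat 0 0 1) :=
    funext fun x => Q_Amat_poly Q (a x) (b x) (c x)
  rw [heq]
  fun_prop

lemma cont_polar_Amat (Q : QuadraticForm ℝ (Matrix (Fin 3) (Fin 3) ℝ)) {a b c a' b' c' : ℝ → ℝ}
    (ha : Continuous a) (hb : Continuous b) (hc : Continuous c)
    (ha' : Continuous a') (hb' : Continuous b') (hc' : Continuous c') :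
    Continuous fun x => polar Q (Amat (a x) (b x) (c x)) (Amat (a' x) (b' x) (c' x)) := by
  have h : ∀ x, polar Q (Amat (a x) (b x) (c x)) (Amat (a' x) (b' x) (c' x))
      = Q (Amat (a x + a' x) (b x + b' x) (c x + c' x))
        - Q (Amat (a x) (b x) (c x)) - Q (Amat (a' x) (b' x) (c' x)) := by
    intro x; rw [Amat_add, QuadraticMap.polar]
  simp only [h]
  exact ((cont_Q_Amat Q (ha.add ha') (hb.add hb') (hc.add hc')).sub
    (cont_Q_Amat Q ha hb hc)).sub (cont_Q_Amat Q ha' hb' hc')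

lemma Q_Amat_nonneg (Q : QuadraticForm ℝ (Matrix (Fin 3) (Fin 3) ℝ))
    (hQ : ∀ F : Matrix (Fin 3) (Fin 3) ℝ, Fᵀ = -F → F ≠ 0 → 0 < Q F) (a b c : ℝ) :
    0 ≤ Q (Amat a b c) := by
  by_cases h : Amat a b c = 0
  · rw [h]; simp
  · exact (hQ _ (Amat_transpose a b c) h).le

lemma Q_Amat_eq_zero (Q : QuadraticForm ℝ (Matrix (Fin 3) (Fin 3) ℝ))
    (hQ : ∀ F : Matrix (Fin 3) (Fin 3) ℝ, Fᵀ = -F → F ≠ 0 → 0 < Q F) {a b c : ℝ}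
    (h : Q (Amat a b c) = 0) : a = 0 ∧ b = 0 ∧ c = 0 := by
  by_contra hne
  have hA : Amat a b c ≠ 0 := fun h0 => hne (Amat_eq_zero_iff.mp h0)
  exact absurd h (ne_of_gt (hQ _ (Amat_transpose a b c) hA))

section derivs

variable {f g : ℝ → ℝ}

lemma deriv_add_smul (hf : Differentiable ℝ f) (hg : Differentiable ℝ g) (t : ℝ) :
    deriv (fun x => f x + t * g x) = fun x => deriv f x + t * deriv g x :=
  funext fun x => (((hf x).hasDerivAt).add (((hg x).hasDerivAt).const_mul t)).deriv

lemma c2_deriv_c1 (h : ContDiff ℝ 2 f) : ContDiff ℝ 1 (deriv f) := by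
  rw [show (2 : WithTop ℕ∞) = 1 + 1 by norm_num, contDiff_succ_iff_deriv] at h
  exact h.2.2

lemma deriv2_add_smul (hf : ContDiff ℝ 2 f) (hg : ContDiff ℝ 2 g) (t : ℝ) (x : ℝ) :
    deriv (deriv (fun y => f y + t * g y)) x = deriv (deriv f) x + t * deriv (deriv g) x := by
  rw [deriv_add_smul (hf.differentiable two_ne_zero) (hg.differentiable two_ne_zero) t]
  exact congrFun (deriv_add_smul ((c2_deriv_c1 hf).differentiable one_ne_zero)
    ((c2_deriv_c1 hg).differentiable one_ne_zero) t) x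

end derivs

/-- strain at `p` -/
noncomputable def epf (p : RodPt) (x : ℝ) : ℝ :=
  deriv p.u x + ((deriv p.v2 x) ^ 2 + (deriv p.v3 x) ^ 2) / 2

/-- first-order coefficient of the strain along the variation `q` -/
noncomputable def alph (p q : RodPt) (x : ℝ) : ℝ :=
  deriv q.u x + deriv p.v2 x * deriv q.v2 x + deriv p.v3 x * deriv q.v3 x

/-- second-order coefficient of the strain along the variation `q` -/
noncomputable def btf (q : RodPt) (x : ℝ) : ℝ := ((deriv q.v2 x) ^ 2 + (deriv q.v3 x) ^ 2) / 2

/-- curvature matrix -/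
noncomputable def AxM (p : RodPt) (x : ℝ) : Matrix (Fin 3) (Fin 3) ℝ :=
  Amat (deriv (deriv p.v2) x) (deriv (deriv p.v3) x) (deriv p.w x)

lemma adm_cont_du {p : RodPt} (hp : Adm p) : Continuous (deriv p.u) :=
  hp.1.continuous_deriv le_rfl

lemma adm_cont_dv2 {p : RodPt} (hp : Adm p) : Continuous (deriv p.v2) :=
  hp.2.1.continuous_deriv one_le_two

lemma adm_cont_dv3 {p : RodPt} (hp : Adm p) : Continuous (deriv p.v3) :=
  hp.2.2.1.continuous_deriv one_le_two

lemma adm_cont_ddv2 {p : RodPt} (hp : Adm p) : Continuous (deriv (deriv p.v2)) :=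
  (c2_deriv_c1 hp.2.1).continuous_deriv le_rfl

lemma adm_cont_ddv3 {p : RodPt} (hp : Adm p) : Continuous (deriv (deriv p.v3)) :=
  (c2_deriv_c1 hp.2.2.1).continuous_deriv le_rfl

lemma adm_cont_dw {p : RodPt} (hp : Adm p) : Continuous (deriv p.w) :=
  hp.2.2.2.1.continuous_deriv le_rfl

lemma cont_epf {p : RodPt} (hp : Adm p) : Continuous (epf p) := by
  have h1 := adm_cont_du hp; have h2 := adm_cont_dv2 hp; have h3 := adm_cont_dv3 hp
  unfold epf; fun_prop

lemma cont_alph {p q : RodPt} (hp : Adm p) (hq : Adm q) : Continuous (alph p q) := by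
  have h1 := adm_cont_du hq; have h2 := adm_cont_dv2 hp; have h3 := adm_cont_dv3 hp
  have h4 := adm_cont_dv2 hq; have h5 := adm_cont_dv3 hq
  unfold alph; fun_prop

lemma cont_btf {q : RodPt} (hq : Adm q) : Continuous (btf q) := by
  have h1 := adm_cont_dv2 hq; have h2 := adm_cont_dv3 hq
  unfold btf; fun_prop

lemma cont_Q_AxM (Q1 : QuadraticForm ℝ (Matrix (Fin 3) (Fin 3) ℝ)) {p : RodPt} (hp : Adm p) :
    Continuous fun x => Q1 (AxM p x) :=
  cont_Q_Amat Q1 (adm_cont_ddv2 hp) (adm_cont_ddv3 hp) (adm_cont_dw hp)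

lemma cont_polar_AxM (Q1 : QuadraticForm ℝ (Matrix (Fin 3) (Fin 3) ℝ)) {p q : RodPt}
    (hp : Adm p) (hq : Adm q) : Continuous fun x => polar Q1 (AxM p x) (AxM q x) :=
  cont_polar_Amat Q1 (adm_cont_ddv2 hp) (adm_cont_ddv3 hp) (adm_cont_dw hp)
    (adm_cont_ddv2 hq) (adm_cont_ddv3 hq) (adm_cont_dw hq)

/-- integrability of the force term -/
lemma force_II {L : ℝ} (hL : 0 < L) {f2 f3 g2 g3 : ℝ → ℝ}
    (hf2 : MemLp f2 2 (volume.restrict (Set.Ioo 0 L)))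
    (hf3 : MemLp f3 2 (volume.restrict (Set.Ioo 0 L)))
    (hg2 : Continuous g2) (hg3 : Continuous g3) :
    IntervalIntegrable (fun x => f2 x * g2 x + f3 x * g3 x) volume 0 L := by
  have key : ∀ (f g : ℝ → ℝ), MemLp f 2 (volume.restrict (Set.Ioo 0 L)) → Continuous g →
      IntegrableOn (fun x => f x * g x) (Set.Ioo 0 L) volume := by
    intro f g hf hg
    have hfi : Integrable f (volume.restrict (Set.Ioo 0 L)) := hf.integrable one_le_two
    obtain ⟨C, hC⟩ := isCompact_Icc.exists_bound_of_continuousOn (s := Set.Icc (0:ℝ) L)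
      hg.continuousOn
    have hbd : ∀ᵐ x ∂(volume.restrict (Set.Ioo 0 L)), ‖g x‖ ≤ C :=
      (ae_restrict_iff' measurableSet_Ioo).2
        (Filter.Eventually.of_forall fun x hx => hC x (Set.Ioo_subset_Icc_self hx))
    have := Integrable.bdd_mul (f := g) (g := f) hfi hg.aestronglyMeasurable hbd
    exact this.congr (Filter.Eventually.of_forall fun x => mul_comm _ _)
  have h2 := key f2 g2 hf2 hg2
  have h3 := key f3 g3 hf3 hg3
  rw [intervalIntegrable_iff_integrableOn_Ioo_of_le hL.le]
  exact h2.add h3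

lemma adm_addRod {p q : RodPt} (hp : Adm p) (hq : Adm q) (t : ℝ) : Adm (addRod p q t) := by
  obtain ⟨hu, hv2, hv3, hw, b1, b2, b3, b4, b5, b6⟩ := hp
  obtain ⟨hu', hv2', hv3', hw', c1, c2, c3, c4, c5, c6⟩ := hq
  refine ⟨hu.add (contDiff_const.mul hu'), hv2.add (contDiff_const.mul hv2'),
    hv3.add (contDiff_const.mul hv3'), hw.add (contDiff_const.mul hw'), ?_, ?_, ?_, ?_, ?_, ?_⟩
  · show p.u 0 + t * q.u 0 = 0; rw [b1, c1]; ring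
  · show p.v2 0 + t * q.v2 0 = 0; rw [b2, c2]; ring
  · show deriv (fun x => p.v2 x + t * q.v2 x) 0 = 0
    rw [deriv_add_smul (hv2.differentiable two_ne_zero) (hv2'.differentiable two_ne_zero) t]
    simp only [b3, c3]; ring
  · show p.v3 0 + t * q.v3 0 = 0; rw [b4, c4]; ring
  · show deriv (fun x => p.v3 x + t * q.v3 x) 0 = 0
    rw [deriv_add_smul (hv3.differentiable two_ne_zero) (hv3'.differentiable two_ne_zero) t]
    simp only [b5, c5]; ring
  · show p.w 0 + t * q.w 0 = 0; rw [b6, c6]; ring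

section expansion

variable (L EE : ℝ) (Q1 : QuadraticForm ℝ (Matrix (Fin 3) (Fin 3) ℝ)) (f2 f3 : ℝ → ℝ)
  (p q : RodPt)

/-- first variation coefficient -/
noncomputable def C1v : ℝ :=
  (1 / 2) * (∫ x in (0:ℝ)..L,
      (2 * EE * (epf p x * alph p q x) + polar Q1 (AxM p x) (AxM q x))) -
    (L / 2) * (∫ x in (0:ℝ)..L, (f2 x * q.v2 x + f3 x * q.v3 x))

/-- second variation coefficient -/
noncomputable def C2v : ℝ :=
  (1 / 2) * (∫ x in (0:ℝ)..L,
    (EE * ((alph p q x) ^ 2 + 2 * epf p x * btf q x) + Q1 (AxM q x)))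

/-- third variation coefficient -/
noncomputable def C3v : ℝ :=
  (1 / 2) * (∫ x in (0:ℝ)..L, (2 * EE * (alph p q x * btf q x)))

/-- fourth variation coefficient -/
noncomputable def C4v : ℝ :=
  (1 / 2) * (∫ x in (0:ℝ)..L, (EE * (btf q x) ^ 2))

lemma Jfun_eq (hp : Adm p) : Jfun L EE Q1 f2 f3 p =
    (1 / 2) * (∫ x in (0:ℝ)..L, (EE * (epf p x) ^ 2 + Q1 (AxM p x))) -
      (L / 2) * (∫ x in (0:ℝ)..L, (f2 x * p.v2 x + f3 x * p.v3 x)) := by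
  have h0 : Jfun L EE Q1 f2 f3 p = (1 / 2) * (∫ x in (0:ℝ)..L,
      ((EE * (epf p x) ^ 2 + Q1 (AxM p x)) -
        ∫ y in (0:ℝ)..L, (f2 y * p.v2 y + f3 y * p.v3 y))) := rfl
  have hI0 : IntervalIntegrable (fun x => EE * (epf p x) ^ 2 + Q1 (AxM p x)) volume 0 L :=
    ((continuous_const.mul ((cont_epf hp).pow 2)).add (cont_Q_AxM Q1 hp)).intervalIntegrable 0 L
  rw [h0, intervalIntegral.integral_sub hI0 intervalIntegrable_const,
    intervalIntegral.integral_const]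
  simp only [sub_zero, smul_eq_mul]
  ring

lemma Jfun_addRod (hL : 0 < L) (hp : Adm p) (hq : Adm q)
    (hf2 : MemLp f2 2 (volume.restrict (Set.Ioo 0 L)))
    (hf3 : MemLp f3 2 (volume.restrict (Set.Ioo 0 L))) (t : ℝ) :
    Jfun L EE Q1 f2 f3 (addRod p q t) = Jfun L EE Q1 f2 f3 p
      + t * C1v L EE Q1 f2 f3 p q + t ^ 2 * C2v L EE Q1 p q
      + t ^ 3 * C3v L EE p q + t ^ 4 * C4v L EE q := by
  have du : deriv (fun y => p.u y + t * q.u y) = fun x => deriv p.u x + t * deriv q.u x :=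
    deriv_add_smul (hp.1.differentiable one_ne_zero) (hq.1.differentiable one_ne_zero) t
  have dv2 : deriv (fun y => p.v2 y + t * q.v2 y) = fun x => deriv p.v2 x + t * deriv q.v2 x :=
    deriv_add_smul (hp.2.1.differentiable two_ne_zero) (hq.2.1.differentiable two_ne_zero) t
  have dv3 : deriv (fun y => p.v3 y + t * q.v3 y) = fun x => deriv p.v3 x + t * deriv q.v3 x :=
    deriv_add_smul (hp.2.2.1.differentiable two_ne_zero) (hq.2.2.1.differentiable two_ne_zero) t
  have dw : deriv (fun y => p.w y + t * q.w y) = fun x => deriv p.w x + t * deriv q.w x :=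
    deriv_add_smul (hp.2.2.2.1.differentiable one_ne_zero) (hq.2.2.2.1.differentiable one_ne_zero) t
  -- the quadratic-energy integrand as a polynomial in t
  have hfun : (fun x => EE * (epf (addRod p q t) x) ^ 2 + Q1 (AxM (addRod p q t) x))
      = fun x => (EE * (epf p x) ^ 2 + Q1 (AxM p x))
        + (t * (2 * EE * (epf p x * alph p q x) + polar Q1 (AxM p x) (AxM q x))
        + (t ^ 2 * (EE * ((alph p q x) ^ 2 + 2 * epf p x * btf q x) + Q1 (AxM q x))
        + (t ^ 3 * (2 * EE * (alph p q x * btf q x)) + t ^ 4 * (EE * (btf q x) ^ 2)))) := by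
    funext x
    show EE * (epf (addRod p q t) x) ^ 2 + Q1 (AxM (addRod p q t) x) = _
    simp only [epf, AxM, addRod]
    rw [show (deriv (deriv fun y => p.v2 y + t * q.v2 y)) x
        = deriv (deriv p.v2) x + t * deriv (deriv q.v2) x from deriv2_add_smul hp.2.1 hq.2.1 t x,
      show (deriv (deriv fun y => p.v3 y + t * q.v3 y)) x
        = deriv (deriv p.v3) x + t * deriv (deriv q.v3) x from
          deriv2_add_smul hp.2.2.1 hq.2.2.1 t x]
    simp only [du, dv2, dv3, dw]
    rw [Amat_add_smul, Q_add_smul]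
    simp only [epf, alph, btf, AxM]
    ring
  -- the force integrand as a polynomial in t
  have hforce : (fun x => f2 x * (addRod p q t).v2 x + f3 x * (addRod p q t).v3 x)
      = fun x => (f2 x * p.v2 x + f3 x * p.v3 x) + t * (f2 x * q.v2 x + f3 x * q.v3 x) := by
    funext x
    simp only [addRod]
    ring
  -- integrability of all coefficient functions
  have hI0 : IntervalIntegrable (fun x => EE * (epf p x) ^ 2 + Q1 (AxM p x)) volume 0 L :=
    ((continuous_const.mul ((cont_epf hp).pow 2)).add (cont_Q_AxM Q1 hp)).intervalIntegrable 0 L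
  have hI1 : IntervalIntegrable
      (fun x => 2 * EE * (epf p x * alph p q x) + polar Q1 (AxM p x) (AxM q x)) volume 0 L :=
    ((continuous_const.mul ((cont_epf hp).mul (cont_alph hp hq))).add
      (cont_polar_AxM Q1 hp hq)).intervalIntegrable 0 L
  have hI2 : IntervalIntegrable
      (fun x => EE * ((alph p q x) ^ 2 + 2 * epf p x * btf q x) + Q1 (AxM q x)) volume 0 L :=
    ((continuous_const.mul (((cont_alph hp hq).pow 2).add
      ((continuous_const.mul (cont_epf hp)).mul (cont_btf hq)))).add
      (cont_Q_AxM Q1 hq)).intervalIntegrable 0 L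
  have hI3 : IntervalIntegrable (fun x => 2 * EE * (alph p q x * btf q x)) volume 0 L :=
    (continuous_const.mul ((cont_alph hp hq).mul (cont_btf hq))).intervalIntegrable 0 L
  have hI4 : IntervalIntegrable (fun x => EE * (btf q x) ^ 2) volume 0 L :=
    (continuous_const.mul ((cont_btf hq).pow 2)).intervalIntegrable 0 L
  -- split the integrals
  have e1 : (∫ x in (0:ℝ)..L, (EE * (epf (addRod p q t) x) ^ 2 + Q1 (AxM (addRod p q t) x)))
      = (∫ x in (0:ℝ)..L, (EE * (epf p x) ^ 2 + Q1 (AxM p x)))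
        + (t * ∫ x in (0:ℝ)..L,
            (2 * EE * (epf p x * alph p q x) + polar Q1 (AxM p x) (AxM q x)))
        + (t ^ 2 * ∫ x in (0:ℝ)..L,
            (EE * ((alph p q x) ^ 2 + 2 * epf p x * btf q x) + Q1 (AxM q x)))
        + (t ^ 3 * ∫ x in (0:ℝ)..L, (2 * EE * (alph p q x * btf q x)))
        + (t ^ 4 * ∫ x in (0:ℝ)..L, (EE * (btf q x) ^ 2)) := by
    rw [hfun]
    rw [integral_add hI0 ((hI1.const_mul t).add (((hI2.const_mul (t ^ 2)).add
        ((hI3.const_mul (t ^ 3)).add (hI4.const_mul (t ^ 4)))))),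
      integral_add (hI1.const_mul t) ((hI2.const_mul (t ^ 2)).add
        ((hI3.const_mul (t ^ 3)).add (hI4.const_mul (t ^ 4)))),
      integral_add (hI2.const_mul (t ^ 2)) ((hI3.const_mul (t ^ 3)).add (hI4.const_mul (t ^ 4))),
      integral_add (hI3.const_mul (t ^ 3)) (hI4.const_mul (t ^ 4)),
      intervalIntegral.integral_const_mul t (fun x => 2 * EE * (epf p x * alph p q x)
        + polar Q1 (AxM p x) (AxM q x)),
      intervalIntegral.integral_const_mul (t ^ 2) (fun x => EE * ((alph p q x) ^ 2 + 2 * epf p x * btf q x)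
        + Q1 (AxM q x)),
      intervalIntegral.integral_const_mul (t ^ 3) (fun x => 2 * EE * (alph p q x * btf q x)),
      intervalIntegral.integral_const_mul (t ^ 4) (fun x => EE * (btf q x) ^ 2)]
    ring
  have hF0 : IntervalIntegrable (fun x => f2 x * p.v2 x + f3 x * p.v3 x) volume 0 L :=
    force_II hL hf2 hf3 hp.2.1.continuous hp.2.2.1.continuous
  have hF1 : IntervalIntegrable (fun x => f2 x * q.v2 x + f3 x * q.v3 x) volume 0 L :=
    force_II hL hf2 hf3 hq.2.1.continuous hq.2.2.1.continuous
  have e2 : (∫ x in (0:ℝ)..L, (f2 x * (addRod p q t).v2 x + f3 x * (addRod p q t).v3 x))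
      = (∫ x in (0:ℝ)..L, (f2 x * p.v2 x + f3 x * p.v3 x))
        + t * ∫ x in (0:ℝ)..L, (f2 x * q.v2 x + f3 x * q.v3 x) := by
    rw [hforce, integral_add hF0 (hF1.const_mul t),
      intervalIntegral.integral_const_mul t (fun x => f2 x * q.v2 x + f3 x * q.v3 x)]
  rw [Jfun_eq L EE Q1 f2 f3 (addRod p q t) (adm_addRod hp hq t), Jfun_eq L EE Q1 f2 f3 p hp,
    e1, e2]
  unfold C1v C2v C3v C4v
  ring

end expansion

section stationary

variable {L EE : ℝ} {Q1 : QuadraticForm ℝ (Matrix (Fin 3) (Fin 3) ℝ)} {f2 f3 : ℝ → ℝ}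

lemma poly_hasDerivAt (a0 a1 a2 a3 a4 : ℝ) :
    HasDerivAt (fun t : ℝ => a0 + t * a1 + t ^ 2 * a2 + t ^ 3 * a3 + t ^ 4 * a4) a1 0 := by
  have hD : HasDerivAt
      (fun t : ℝ => a0 + t * a1 + t ^ 2 * a2 + t ^ 3 * a3 + t ^ 4 * a4)
      (0 + 1 * a1 + ((2 : ℕ) : ℝ) * (0:ℝ) ^ (2 - 1) * a2
        + ((3 : ℕ) : ℝ) * (0:ℝ) ^ (3 - 1) * a3 + ((4 : ℕ) : ℝ) * (0:ℝ) ^ (4 - 1) * a4) 0 :=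
    ((((hasDerivAt_const (0:ℝ) a0).add ((hasDerivAt_id (0:ℝ)).mul_const a1)).add
      ((hasDerivAt_pow 2 (0:ℝ)).mul_const a2)).add
        ((hasDerivAt_pow 3 (0:ℝ)).mul_const a3)).add ((hasDerivAt_pow 4 (0:ℝ)).mul_const a4)
  norm_num at hD
  exact hD

lemma stationary_C1v_zero (hL : 0 < L)
    (hf2 : MemLp f2 2 (volume.restrict (Set.Ioo 0 L)))
    (hf3 : MemLp f3 2 (volume.restrict (Set.Ioo 0 L)))
    {p : RodPt} (hst : Stationary L EE Q1 f2 f3 p) {q : RodPt} (hq : Adm q) :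
    C1v L EE Q1 f2 f3 p q = 0 := by
  have hpoly : (fun t : ℝ => Jfun L EE Q1 f2 f3 (addRod p q t))
      = fun t : ℝ => Jfun L EE Q1 f2 f3 p + t * C1v L EE Q1 f2 f3 p q
        + t ^ 2 * C2v L EE Q1 p q + t ^ 3 * C3v L EE p q + t ^ 4 * C4v L EE q :=
    funext fun t => Jfun_addRod L EE Q1 f2 f3 p q hL hst.1 hq hf2 hf3 t
  have hD' : HasDerivAt (fun t : ℝ => Jfun L EE Q1 f2 f3 (addRod p q t))
      (C1v L EE Q1 f2 f3 p q) 0 := by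
    rw [hpoly]
    exact poly_hasDerivAt _ _ _ _ _
  exact ((hst.2 q hq).unique hD').symm

/-- a continuous nonnegative function with vanishing integral vanishes on `[0, L]` -/
lemma zero_of_integral_zero (hL : 0 < L) {f : ℝ → ℝ} (hc : Continuous f)
    (hnn : ∀ x ∈ Set.Icc (0:ℝ) L, 0 ≤ f x) (hzero : (∫ x in (0:ℝ)..L, f x) = 0) :
    ∀ x ∈ Set.Icc (0:ℝ) L, f x = 0 := by
  have hInt : IntegrableOn f (Set.Ioo 0 L) volume := by
    have := hc.intervalIntegrable (μ := volume) 0 L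
    rwa [intervalIntegrable_iff_integrableOn_Ioo_of_le hL.le] at this
  have hIoo : ∀ x ∈ Set.Ioo (0:ℝ) L, f x = 0 := by
    have h0 : ∫ x in Set.Ioo (0:ℝ) L, f x = 0 := by
      rw [intervalIntegral.integral_of_le hL.le, MeasureTheory.integral_Ioc_eq_integral_Ioo]
        at hzero
      exact hzero
    have hnn' : 0 ≤ᵐ[volume.restrict (Set.Ioo (0:ℝ) L)] f := by
      filter_upwards [ae_restrict_mem measurableSet_Ioo] with x hx
      exact hnn x (Set.Ioo_subset_Icc_self hx)
    have hae : f =ᵐ[volume.restrict (Set.Ioo (0:ℝ) L)] 0 :=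
      (MeasureTheory.integral_eq_zero_iff_of_nonneg_ae hnn' hInt).mp h0
    have hopen : IsOpen {x : ℝ | f x ≠ 0} := isOpen_compl_singleton.preimage hc
    have hmeas : MeasurableSet {x : ℝ | f x ≠ 0} := hopen.measurableSet
    have hm : volume ({x : ℝ | f x ≠ 0} ∩ Set.Ioo 0 L) = 0 := by
      have h := hae
      rw [Filter.EventuallyEq, ae_iff] at h
      simp only [Pi.zero_apply] at h
      rwa [Measure.restrict_apply hmeas] at h
    have hemp : {x : ℝ | f x ≠ 0} ∩ Set.Ioo 0 L = ∅ :=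
      ((hopen.inter isOpen_Ioo).measure_eq_zero_iff volume).mp hm
    intro x hx
    by_contra hne
    exact absurd hemp (Set.nonempty_iff_ne_empty.mp ⟨x, hne, hx⟩)
  intro x hx
  have hcl : Set.Icc (0:ℝ) L = closure (Set.Ioo (0:ℝ) L) := (closure_Ioo hL.ne).symm
  exact (Set.EqOn.closure hIoo hc continuous_const) (hcl ▸ hx)

/-- FTC consequence: a function with vanishing derivative on `[0,L]` and zero initial value
vanishes on `[0,L]`. -/
lemma zero_on_of_deriv_zero (hL : 0 < L) {f : ℝ → ℝ} (hf : Differentiable ℝ f)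
    (hcont : Continuous (deriv f)) (hd : ∀ x ∈ Set.Icc (0:ℝ) L, deriv f x = 0)
    (h0 : f 0 = 0) : ∀ x ∈ Set.Icc (0:ℝ) L, f x = 0 := by
  intro x hx
  have h1 : ∫ y in (0:ℝ)..x, deriv f y = f x - f 0 :=
    intervalIntegral.integral_deriv_eq_sub (fun y _ => hf y) (hcont.intervalIntegrable 0 x)
  have h2 : ∫ y in (0:ℝ)..x, deriv f y = 0 := by
    have hEq : Set.EqOn (deriv f) (fun _ => (0:ℝ)) (Set.uIcc (0:ℝ) x) := by
      intro y hy
      rw [Set.uIcc_of_le hx.1] at hy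
      exact hd y ⟨hy.1, le_trans hy.2 hx.2⟩
    rw [intervalIntegral.integral_congr hEq]
    simp
  rw [h2] at h1
  linarith

/-- the strain vanishes at a stationary point -/
lemma stationary_epf_zero (hL : 0 < L) (hEE : 0 < EE)
    (hf2 : MemLp f2 2 (volume.restrict (Set.Ioo 0 L)))
    (hf3 : MemLp f3 2 (volume.restrict (Set.Ioo 0 L)))
    {p : RodPt} (hst : Stationary L EE Q1 f2 f3 p) :
    ∀ x ∈ Set.Icc (0:ℝ) L, epf p x = 0 := by
  have hp := hst.1
  have hecont : Continuous (epf p) := cont_epf hp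
  set φ : ℝ → ℝ := fun x => ∫ y in (0:ℝ)..x, epf p y with hφdef
  have hφd : ∀ x, HasDerivAt φ (epf p x) x := fun x =>
    intervalIntegral.integral_hasDerivAt_right (hecont.intervalIntegrable 0 x)
      (hecont.stronglyMeasurableAtFilter _ _) hecont.continuousAt
  have hderivφ : deriv φ = epf p := funext fun x => (hφd x).deriv
  have hφ : ContDiff ℝ 1 φ := contDiff_one_iff_deriv.mpr
    ⟨fun x => (hφd x).differentiableAt, by rw [hderivφ]; exact hecont⟩
  set q0 : RodPt := ⟨φ, fun _ => 0, fun _ => 0, fun _ => 0⟩ with hq0def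
  have hq0 : Adm q0 := by
    refine ⟨hφ, contDiff_const, contDiff_const, contDiff_const, ?_, rfl, ?_, rfl, ?_, rfl⟩
    · show φ 0 = 0
      simp [hφdef]
    · show deriv (fun _ => (0:ℝ)) 0 = 0; simp
    · show deriv (fun _ => (0:ℝ)) 0 = 0; simp
  have hC1 := stationary_C1v_zero hL hf2 hf3 hst hq0
  have halph : alph p q0 = epf p := by
    funext x
    show deriv φ x + deriv p.v2 x * deriv (fun _ => (0:ℝ)) x
        + deriv p.v3 x * deriv (fun _ => (0:ℝ)) x = _
    rw [hderivφ]
    simp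
  have hAq0 : ∀ x, AxM q0 x = 0 := by
    intro x
    show Amat (deriv (deriv (fun _ => (0:ℝ))) x) (deriv (deriv (fun _ => (0:ℝ))) x)
        (deriv (fun _ => (0:ℝ)) x) = 0
    simp only [deriv_const']
    simpa using Amat_zero
  have hC1' : C1v L EE Q1 f2 f3 p q0
      = (1 / 2) * ∫ x in (0:ℝ)..L, (2 * EE * (epf p x * epf p x)) := by
    unfold C1v
    have hfun : (fun x => 2 * EE * (epf p x * alph p q0 x) + polar Q1 (AxM p x) (AxM q0 x))
        = fun x => 2 * EE * (epf p x * epf p x) := by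
      funext x
      rw [halph, hAq0 x, QuadraticMap.polar_zero_right, add_zero]
    have hforce : (fun x => f2 x * q0.v2 x + f3 x * q0.v3 x) = fun _ => (0:ℝ) := by
      funext x
      show f2 x * 0 + f3 x * 0 = 0
      ring
    rw [hfun, hforce]
    simp
  have hint0 : (∫ x in (0:ℝ)..L, (2 * EE * (epf p x * epf p x))) = 0 := by
    rw [hC1'] at hC1
    linarith
  have hzero := zero_of_integral_zero hL
    (by continuity : Continuous fun x => 2 * EE * (epf p x * epf p x))
    (fun x _ => mul_nonneg (by linarith) (mul_self_nonneg _)) hint0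
  intro x hx
  have h1 := hzero x hx
  have h2 : epf p x * epf p x = 0 :=
    (mul_eq_zero.mp h1).resolve_left (ne_of_gt (by linarith : (0:ℝ) < 2 * EE))
  exact mul_self_eq_zero.mp h2

end stationary

section uniqueness

variable (L EE : ℝ) (Q1 : QuadraticForm ℝ (Matrix (Fin 3) (Fin 3) ℝ)) (f2 f3 : ℝ → ℝ)

/-- the difference `q - p` -/
def subRod (q p : RodPt) : RodPt :=
  ⟨fun x => q.u x - p.u x, fun x => q.v2 x - p.v2 x,
    fun x => q.v3 x - p.v3 x, fun x => q.w x - p.w x⟩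

lemma deriv_sub_fun {f g : ℝ → ℝ} (hf : Differentiable ℝ f) (hg : Differentiable ℝ g) :
    deriv (fun x => f x - g x) = fun x => deriv f x - deriv g x :=
  funext fun x => ((hf x).hasDerivAt.sub (hg x).hasDerivAt).deriv

lemma adm_subRod {q p : RodPt} (hq : Adm q) (hp : Adm p) : Adm (subRod q p) := by
  obtain ⟨hu, hv2, hv3, hw, b1, b2, b3, b4, b5, b6⟩ := hp
  obtain ⟨hu', hv2', hv3', hw', c1, c2, c3, c4, c5, c6⟩ := hq
  refine ⟨hu'.sub hu, hv2'.sub hv2, hv3'.sub hv3, hw'.sub hw, ?_, ?_, ?_, ?_, ?_, ?_⟩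
  · show q.u 0 - p.u 0 = 0; rw [b1, c1]; ring
  · show q.v2 0 - p.v2 0 = 0; rw [b2, c2]; ring
  · show deriv (fun x => q.v2 x - p.v2 x) 0 = 0
    rw [deriv_sub_fun (hv2'.differentiable two_ne_zero) (hv2.differentiable two_ne_zero)]
    simp only [b3, c3]; ring
  · show q.v3 0 - p.v3 0 = 0; rw [b4, c4]; ring
  · show deriv (fun x => q.v3 x - p.v3 x) 0 = 0
    rw [deriv_sub_fun (hv3'.differentiable two_ne_zero) (hv3.differentiable two_ne_zero)]
    simp only [b5, c5]; ring
  · show q.w 0 - p.w 0 = 0; rw [b6, c6]; ring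

lemma addRod_subRod (p q : RodPt) : addRod p (subRod q p) 1 = q := by
  obtain ⟨u, v2, v3, w⟩ := q
  simp only [addRod, subRod, RodPt.mk.injEq]
  refine ⟨?_, ?_, ?_, ?_⟩ <;> funext x <;> ring

variable {L EE Q1 f2 f3} in
/-- the sum of the higher-order variation coefficients, at a stationary point -/
lemma sumC_eq (hL : 0 < L) {p d : RodPt} (hp : Adm p) (hd : Adm d)
    (he0 : ∀ x ∈ Set.Icc (0:ℝ) L, epf p x = 0) :
    C2v L EE Q1 p d + C3v L EE p d + C4v L EE d
      = (1 / 2) * ∫ x in (0:ℝ)..L,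
          (EE * (alph p d x + btf d x) ^ 2 + Q1 (AxM d x)) := by
  have hI2 : IntervalIntegrable
      (fun x => EE * ((alph p d x) ^ 2 + 2 * epf p x * btf d x) + Q1 (AxM d x)) volume 0 L :=
    ((continuous_const.mul (((cont_alph hp hd).pow 2).add
      ((continuous_const.mul (cont_epf hp)).mul (cont_btf hd)))).add
      (cont_Q_AxM Q1 hd)).intervalIntegrable 0 L
  have hI3 : IntervalIntegrable (fun x => 2 * EE * (alph p d x * btf d x)) volume 0 L :=
    (continuous_const.mul ((cont_alph hp hd).mul (cont_btf hd))).intervalIntegrable 0 L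
  have hI4 : IntervalIntegrable (fun x => EE * (btf d x) ^ 2) volume 0 L :=
    (continuous_const.mul ((cont_btf hd).pow 2)).intervalIntegrable 0 L
  have hcomb : C2v L EE Q1 p d + C3v L EE p d + C4v L EE d
      = (1 / 2) * ∫ x in (0:ℝ)..L,
          ((EE * ((alph p d x) ^ 2 + 2 * epf p x * btf d x) + Q1 (AxM d x))
            + (2 * EE * (alph p d x * btf d x) + EE * (btf d x) ^ 2)) := by
    rw [integral_add hI2 (hI3.add hI4), integral_add hI3 hI4]
    unfold C2v C3v C4v
    ring
  rw [hcomb]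
  congr 1
  apply intervalIntegral.integral_congr
  intro x hx
  rw [Set.uIcc_of_le hL.le] at hx
  have he := he0 x hx
  simp only
  rw [he]
  ring

variable {L EE Q1 f2 f3} in
lemma Jfun_diff (hL : 0 < L)
    (hf2 : MemLp f2 2 (volume.restrict (Set.Ioo 0 L)))
    (hf3 : MemLp f3 2 (volume.restrict (Set.Ioo 0 L)))
    {p : RodPt} (hst : Stationary L EE Q1 f2 f3 p) {r : RodPt} (hr : Adm r) :
    Jfun L EE Q1 f2 f3 r = Jfun L EE Q1 f2 f3 p
      + (C2v L EE Q1 p (subRod r p) + C3v L EE p (subRod r p) + C4v L EE (subRod r p)) := by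
  have hd := adm_subRod hr hst.1
  have h := Jfun_addRod L EE Q1 f2 f3 p (subRod r p) hL hst.1 hd hf2 hf3 1
  rw [addRod_subRod] at h
  rw [stationary_C1v_zero hL hf2 hf3 hst hd] at h
  rw [h]
  ring

variable {L EE Q1 f2 f3} in
lemma S_nonneg (hL : 0 < L) (hEE : 0 < EE)
    (hQ1pos : ∀ F : Matrix (Fin 3) (Fin 3) ℝ, Fᵀ = -F → F ≠ 0 → 0 < Q1 F)
    {p d : RodPt} (hp : Adm p) (hd : Adm d)
    (he0 : ∀ x ∈ Set.Icc (0:ℝ) L, epf p x = 0) :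
    0 ≤ C2v L EE Q1 p d + C3v L EE p d + C4v L EE d := by
  rw [sumC_eq hL hp hd he0]
  have : 0 ≤ ∫ x in (0:ℝ)..L, (EE * (alph p d x + btf d x) ^ 2 + Q1 (AxM d x)) := by
    apply intervalIntegral.integral_nonneg hL.le
    intro x _
    exact add_nonneg (mul_nonneg hEE.le (sq_nonneg _)) (Q_Amat_nonneg Q1 hQ1pos _ _ _)
  linarith

end uniqueness

end VKaux

open VKaux in
/-- The von Kármán rod functional has at most one stationary point on `𝒜`, and any
stationary point is a global minimum point of `𝒥₃` on `𝒜`. -/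
theorem vonKarman_stationary_unique_and_min
    (L EE : ℝ) (hL : 0 < L) (hEE : 0 < EE)
    (Q1 : QuadraticForm ℝ (Matrix (Fin 3) (Fin 3) ℝ))
    (hQ1pos : ∀ F : Matrix (Fin 3) (Fin 3) ℝ, Fᵀ = -F → F ≠ 0 → 0 < Q1 F)
    (f2 f3 : ℝ → ℝ)
    (hf2 : MemLp f2 2 (volume.restrict (Set.Ioo 0 L)))
    (hf3 : MemLp f3 2 (volume.restrict (Set.Ioo 0 L))) :
    (∀ p q : RodPt, Stationary L EE Q1 f2 f3 p → Stationary L EE Q1 f2 f3 q →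
      ∀ x ∈ Set.Icc (0 : ℝ) L,
        p.u x = q.u x ∧ p.v2 x = q.v2 x ∧ p.v3 x = q.v3 x ∧ p.w x = q.w x) ∧
    (∀ p : RodPt, Stationary L EE Q1 f2 f3 p →
      ∀ r : RodPt, Adm r → Jfun L EE Q1 f2 f3 p ≤ Jfun L EE Q1 f2 f3 r) := by
  constructor
  · -- uniqueness
    intro p q hstp hstq x hx
    have hp := hstp.1
    have hq := hstq.1
    set d := subRod q p with hddef
    have hd : Adm d := adm_subRod hq hp
    have he0 := stationary_epf_zero hL hEE hf2 hf3 hstp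
    have he0q := stationary_epf_zero hL hEE hf2 hf3 hstq
    have hJqp := Jfun_diff hL hf2 hf3 hstp hq
    have hJpq := Jfun_diff hL hf2 hf3 hstq hp
    have hS := S_nonneg hL hEE hQ1pos hp hd he0
    have hS' := S_nonneg hL hEE hQ1pos hq (adm_subRod hp hq) he0q
    have hSzero : C2v L EE Q1 p d + C3v L EE p d + C4v L EE d = 0 := by
      rw [← hddef] at hJqp
      linarith
    rw [sumC_eq hL hp hd he0] at hSzero
    have hGint : (∫ y in (0:ℝ)..L, (EE * (alph p d y + btf d y) ^ 2 + Q1 (AxM d y))) = 0 := by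
      linarith
    have hGcont : Continuous fun y => EE * (alph p d y + btf d y) ^ 2 + Q1 (AxM d y) :=
      (continuous_const.mul (((cont_alph hp hd).add (cont_btf hd)).pow 2)).add
        (cont_Q_AxM Q1 hd)
    have hG0 := zero_of_integral_zero hL hGcont
      (fun y _ => add_nonneg (mul_nonneg hEE.le (sq_nonneg _))
        (Q_Amat_nonneg Q1 hQ1pos _ _ _)) hGint
    have pieces : ∀ y ∈ Set.Icc (0:ℝ) L,
        (deriv (deriv d.v2) y = 0 ∧ deriv (deriv d.v3) y = 0 ∧ deriv d.w y = 0)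
          ∧ alph p d y + btf d y = 0 := by
      intro y hy
      have hGy := hG0 y hy
      have h1 : 0 ≤ EE * (alph p d y + btf d y) ^ 2 := mul_nonneg hEE.le (sq_nonneg _)
      have h2 : 0 ≤ Q1 (AxM d y) := Q_Amat_nonneg Q1 hQ1pos _ _ _
      have hQz : Q1 (AxM d y) = 0 := by linarith
      have hEz : EE * (alph p d y + btf d y) ^ 2 = 0 := by linarith
      have hsum : alph p d y + btf d y = 0 := by
        have := (mul_eq_zero.mp hEz).resolve_left hEE.ne'
        exact pow_eq_zero_iff two_ne_zero |>.mp this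
      exact ⟨Q_Amat_eq_zero Q1 hQ1pos hQz, hsum⟩
    obtain ⟨hdu, hdv2c, hdv3c, hdwc, db1, db2, db3, db4, db5, db6⟩ := hd
    have hdv2 : ∀ y ∈ Set.Icc (0:ℝ) L, deriv d.v2 y = 0 :=
      zero_on_of_deriv_zero hL ((c2_deriv_c1 hdv2c).differentiable one_ne_zero)
        ((c2_deriv_c1 hdv2c).continuous_deriv le_rfl)
        (fun y hy => (pieces y hy).1.1) db3
    have hv2 : ∀ y ∈ Set.Icc (0:ℝ) L, d.v2 y = 0 :=
      zero_on_of_deriv_zero hL (hdv2c.differentiable two_ne_zero)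
        (hdv2c.continuous_deriv one_le_two) hdv2 db2
    have hdv3 : ∀ y ∈ Set.Icc (0:ℝ) L, deriv d.v3 y = 0 :=
      zero_on_of_deriv_zero hL ((c2_deriv_c1 hdv3c).differentiable one_ne_zero)
        ((c2_deriv_c1 hdv3c).continuous_deriv le_rfl)
        (fun y hy => (pieces y hy).1.2.1) db5
    have hv3 : ∀ y ∈ Set.Icc (0:ℝ) L, d.v3 y = 0 :=
      zero_on_of_deriv_zero hL (hdv3c.differentiable two_ne_zero)
        (hdv3c.continuous_deriv one_le_two) hdv3 db4
    have hw : ∀ y ∈ Set.Icc (0:ℝ) L, d.w y = 0 :=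
      zero_on_of_deriv_zero hL (hdwc.differentiable one_ne_zero)
        (hdwc.continuous_deriv le_rfl) (fun y hy => (pieces y hy).1.2.2) db6
    have hdu0 : ∀ y ∈ Set.Icc (0:ℝ) L, deriv d.u y = 0 := by
      intro y hy
      have hsum := (pieces y hy).2
      unfold alph btf at hsum
      rw [hdv2 y hy, hdv3 y hy] at hsum
      norm_num at hsum
      exact hsum
    have hu : ∀ y ∈ Set.Icc (0:ℝ) L, d.u y = 0 :=
      zero_on_of_deriv_zero hL (hdu.differentiable one_ne_zero)
        (hdu.continuous_deriv le_rfl) hdu0 db1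
    exact ⟨(sub_eq_zero.mp (hu x hx)).symm, (sub_eq_zero.mp (hv2 x hx)).symm,
      (sub_eq_zero.mp (hv3 x hx)).symm, (sub_eq_zero.mp (hw x hx)).symm⟩
  · -- minimality
    intro p hst r hr
    rw [Jfun_diff hL hf2 hf3 hst hr]
    have := S_nonneg hL hEE hQ1pos hst.1 (adm_subRod hr hst.1)
      (stationary_epf_zero hL hEE hf2 hf3 hst)
    linarith
end

section
/- In the setting of the previous statement, fix γ ∈ (0, α−2) and let B_h := {x ∈ Ω : h^{α−1−γ}|G^h(x)| ≤ 1}. Then ∫_{Ω∖B_h} |E^h| dx ≤ C h^{α−1−γ}; in particular (1 − χ_{B_h}) E^h → 0 strongly in L¹(Ω; M^{3×3}) as h → 0. -/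
open Matrix MeasureTheory Filter

attribute [local instance] Matrix.normedAddCommGroup Matrix.normedSpace

/-- In the setting of the stress estimate, with `B_h = {x ∈ Ω : h^{α-1-γ}|G^h(x)| ≤ 1}`,
one has `∫_{Ω∖B_h} |E^h| ≤ C h^{α-1-γ}`, and hence `(1-χ_{B_h})E^h → 0` in `L¹` as
`h → 0`. -/
theorem stress_vanishes_off_good_set
    (n : ℕ) (Ω : Set (Fin n → ℝ)) (hΩ : MeasurableSet Ω) (hfin : volume Ω < ⊤)
    (α γ C : ℝ) (hα : 2 < α) (hγ : γ ∈ Set.Ioo (0 : ℝ) (α - 2)) (hC : 0 < C)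
    (E G : ℝ → (Fin n → ℝ) → Matrix (Fin 3) (Fin 3) ℝ)
    (Wf : ℝ → (Fin n → ℝ) → ℝ)
    (hEint : ∀ h ∈ Set.Ioo (0 : ℝ) 1, IntegrableOn (fun x => ‖E h x‖) Ω)
    (hGmeas : ∀ h ∈ Set.Ioo (0 : ℝ) 1, AEStronglyMeasurable (G h) (volume.restrict Ω))
    (hG : ∀ h ∈ Set.Ioo (0 : ℝ) 1,
      eLpNorm (G h) 2 (volume.restrict Ω) ≤ ENNReal.ofReal C)
    (hWnonneg : ∀ h ∈ Set.Ioo (0 : ℝ) 1, ∀ x, 0 ≤ Wf h x)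
    (hWint : ∀ h ∈ Set.Ioo (0 : ℝ) 1, IntegrableOn (Wf h) Ω)
    (hWbd : ∀ h ∈ Set.Ioo (0 : ℝ) 1, (∫ x in Ω, Wf h x) ≤ C * h ^ (2 * α - 2))
    (hpt : ∀ h ∈ Set.Ioo (0 : ℝ) 1, ∀ᵐ x ∂(volume.restrict Ω),
      ‖E h x‖ ≤ C * ((h ^ (α - 1))⁻¹ * Wf h x + ‖G h x‖)) :
    ∃ C' : ℝ, 0 < C' ∧
      (∀ h ∈ Set.Ioo (0 : ℝ) 1,
        (∫ x in Ω \ {x ∈ Ω | h ^ (α - 1 - γ) * ‖G h x‖ ≤ 1}, ‖E h x‖) ≤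
          C' * h ^ (α - 1 - γ)) ∧
      Tendsto (fun h : ℝ => ∫ x in Ω \ {x ∈ Ω | h ^ (α - 1 - γ) * ‖G h x‖ ≤ 1}, ‖E h x‖)
        (nhdsWithin 0 (Set.Ioo (0 : ℝ) 1)) (nhds 0) := by
  have hc : 0 < α - 1 - γ := by have := hγ.2; linarith
  have hbd : ∀ h ∈ Set.Ioo (0 : ℝ) 1,
      (∫ x in Ω \ {x ∈ Ω | h ^ (α - 1 - γ) * ‖G h x‖ ≤ 1}, ‖E h x‖) ≤
        (C * (C + C ^ 2)) * h ^ (α - 1 - γ) := by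
    intro h hh
    obtain ⟨hh0, hh1⟩ := hh
    set c := α - 1 - γ with hc_def
    set S : Set (Fin n → ℝ) := {x ∈ Ω | h ^ c * ‖G h x‖ ≤ 1} with hS
    set A : Set (Fin n → ℝ) := Ω \ S with hA
    have hAΩ : A ⊆ Ω := Set.diff_subset
    have hhc0 : (0:ℝ) < h ^ c := Real.rpow_pos_of_pos hh0 _
    have hha0 : (0:ℝ) < h ^ (α - 1) := Real.rpow_pos_of_pos hh0 _
    -- null-measurability of A
    obtain ⟨G', hG'meas, hGae⟩ := hGmeas h ⟨hh0, hh1⟩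
    have hGae' : ∀ᵐ x ∂volume, x ∈ Ω → G h x = G' x := (ae_restrict_iff' hΩ).mp hGae
    have hA'meas : MeasurableSet (Ω ∩ {x | ¬ (h ^ c * ‖G' x‖ ≤ 1)}) :=
      hΩ.inter (measurableSet_le (measurable_const.mul hG'meas.norm.measurable)
        measurable_const).compl
    have hAnull : NullMeasurableSet A volume := by
      refine hA'meas.nullMeasurableSet.congr ?_
      filter_upwards [hGae'] with x hx
      refine eq_iff_iff.mpr ?_
      constructor
      · rintro ⟨h1, h2⟩
        exact ⟨h1, fun hs => h2 (by rw [← hx h1]; exact hs.2)⟩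
      · rintro ⟨h1, h2⟩
        exact ⟨h1, fun hcond => h2 ⟨h1, by rw [hx h1]; exact hcond⟩⟩
    -- L² facts
    have hGL2 : MemLp (G h) 2 (volume.restrict Ω) :=
      ⟨⟨G', hG'meas, hGae⟩, lt_of_le_of_lt (hG h ⟨hh0, hh1⟩) ENNReal.ofReal_lt_top⟩
    have hGsq_int : IntegrableOn (fun x => ‖G h x‖ ^ 2) Ω := hGL2.norm.integrable_sq
    have hI0 : (0:ℝ) ≤ ∫ x in Ω, ‖G h x‖ ^ (2:ℕ) :=
      integral_nonneg fun x => by positivity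
    have hsqrt : (∫ x in Ω, ‖G h x‖ ^ (2:ℕ)) ^ (2⁻¹:ℝ) ≤ C := by
      have h1 := hGL2.eLpNorm_eq_integral_rpow_norm two_ne_zero ENNReal.ofNat_ne_top
      have h2 := hG h ⟨hh0, hh1⟩
      rw [h1] at h2
      have h3 := (ENNReal.ofReal_le_ofReal_iff hC.le).mp h2
      simpa only [ENNReal.toReal_ofNat, Real.rpow_two] using h3
    have hGsq_bd : (∫ x in Ω, ‖G h x‖ ^ 2) ≤ C ^ 2 := by
      calc (∫ x in Ω, ‖G h x‖ ^ 2)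
          = ((∫ x in Ω, ‖G h x‖ ^ (2:ℕ)) ^ (2⁻¹:ℝ)) ^ (2:ℕ) := by
            rw [← Real.rpow_natCast _ 2, ← Real.rpow_mul hI0]
            norm_num
        _ ≤ C ^ 2 := pow_le_pow_left₀ (Real.rpow_nonneg hI0 _) hsqrt 2
    -- the dominating function
    set g : (Fin n → ℝ) → ℝ :=
      fun x => C * ((h ^ (α - 1))⁻¹ * Wf h x + h ^ c * ‖G h x‖ ^ 2) with hg
    have hgint : IntegrableOn g Ω := by
      exact (((hWint h ⟨hh0, hh1⟩).const_mul _).add (hGsq_int.const_mul _)).const_mul C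
    have hgnonneg : ∀ x, 0 ≤ g x := fun x => by
      have := hWnonneg h ⟨hh0, hh1⟩ x
      positivity
    -- step 1 : ∫_A ‖E‖ ≤ ∫_A g
    have step1 : (∫ x in A, ‖E h x‖) ≤ ∫ x in A, g x := by
      refine integral_mono_ae ((hEint h ⟨hh0, hh1⟩).mono_set hAΩ)
        (hgint.mono_set hAΩ) ?_
      have hptA : ∀ᵐ x ∂volume.restrict A,
          ‖E h x‖ ≤ C * ((h ^ (α - 1))⁻¹ * Wf h x + ‖G h x‖) :=
        ae_mono (Measure.restrict_mono hAΩ le_rfl) (hpt h ⟨hh0, hh1⟩)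
      filter_upwards [hptA, ae_restrict_mem₀ hAnull] with x hx hxA
      refine hx.trans ?_
      have hG1 : 1 < h ^ c * ‖G h x‖ := lt_of_not_ge fun hle => hxA.2 ⟨hxA.1, hle⟩
      have hGnn : (0:ℝ) ≤ ‖G h x‖ := norm_nonneg _
      have : ‖G h x‖ ≤ h ^ c * ‖G h x‖ ^ 2 := by nlinarith
      simp only [hg]
      exact mul_le_mul_of_nonneg_left (add_le_add le_rfl this) hC.le
    -- step 2 : ∫_A g ≤ ∫_Ω g
    have step2 : (∫ x in A, g x) ≤ ∫ x in Ω, g x :=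
      setIntegral_mono_set hgint (Filter.Eventually.of_forall hgnonneg)
        (HasSubset.Subset.eventuallyLE hAΩ)
    -- step 3 : compute and bound ∫_Ω g
    have step3 : (∫ x in Ω, g x) ≤ (C * (C + C ^ 2)) * h ^ c := by
      have hsplit : (∫ x in Ω, g x)
          = C * ((h ^ (α - 1))⁻¹ * (∫ x in Ω, Wf h x) + h ^ c * (∫ x in Ω, ‖G h x‖ ^ 2)) := by
        rw [hg]
        rw [integral_const_mul]
        congr 1
        rw [integral_add ((hWint h ⟨hh0, hh1⟩).const_mul _) (hGsq_int.const_mul _),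
          integral_const_mul _ _, integral_const_mul]
      rw [hsplit]
      have h1 : (h ^ (α - 1))⁻¹ * (∫ x in Ω, Wf h x) ≤ (h ^ (α - 1))⁻¹ * (C * h ^ (2 * α - 2)) := by
        exact mul_le_mul_of_nonneg_left (hWbd h ⟨hh0, hh1⟩) (by positivity)
      have h2 : (h ^ (α - 1))⁻¹ * (C * h ^ (2 * α - 2)) = C * h ^ (α - 1) := by
        rw [show 2 * α - 2 = (α - 1) + (α - 1) by ring, Real.rpow_add hh0]
        field_simp
      have h3 : h ^ (α - 1) ≤ h ^ c :=
        Real.rpow_le_rpow_of_exponent_ge hh0 hh1.le (by rw [hc_def]; linarith [hγ.1])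
      have h4 : h ^ c * (∫ x in Ω, ‖G h x‖ ^ 2) ≤ h ^ c * C ^ 2 :=
        mul_le_mul_of_nonneg_left hGsq_bd hhc0.le
      calc C * ((h ^ (α - 1))⁻¹ * (∫ x in Ω, Wf h x) + h ^ c * (∫ x in Ω, ‖G h x‖ ^ 2))
          ≤ C * (C * h ^ (α - 1) + h ^ c * C ^ 2) := by
            refine mul_le_mul_of_nonneg_left (add_le_add (h1.trans_eq h2) h4) hC.le
        _ ≤ C * (C * h ^ c + h ^ c * C ^ 2) := by nlinarith
        _ = (C * (C + C ^ 2)) * h ^ c := by ring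
    exact (step1.trans step2).trans step3
  refine ⟨C * (C + C ^ 2), by positivity, hbd, ?_⟩
  have h0 : Tendsto (fun h : ℝ => (C * (C + C ^ 2)) * h ^ (α - 1 - γ))
      (nhdsWithin 0 (Set.Ioo (0 : ℝ) 1)) (nhds 0) := by
    have hcont : ContinuousAt (fun h : ℝ => h ^ (α - 1 - γ)) 0 :=
      Real.continuousAt_rpow_const 0 _ (Or.inr hc.le)
    have : Tendsto (fun h : ℝ => h ^ (α - 1 - γ)) (nhds 0) (nhds 0) := by
      have := hcont.tendsto
      rwa [Real.zero_rpow hc.ne'] at this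
    have h2 := (this.const_mul (C * (C + C ^ 2))).mono_left
      (nhdsWithin_le_nhds (a := (0:ℝ)) (s := Set.Ioo (0:ℝ) 1))
    simpa using h2
  refine tendsto_of_tendsto_of_tendsto_of_le_of_le' tendsto_const_nhds h0 ?_ ?_
  · exact Filter.eventually_of_mem self_mem_nhdsWithin fun h hh =>
      integral_nonneg fun x => norm_nonneg _
  · exact Filter.eventually_of_mem self_mem_nhdsWithin fun h hh => hbd h hh
end

section
/- Let 2 < α < 3 and choose n₀ ∈ ℕ with α > 2 + 1/(2n₀+3). Under the recursive iteration ζ^h_{n₀}(t) = t − ṽ^h(t), ζ^h_n(t) = t − ṽ^h(ζ^h_{n+1}(t)), with hypotheses ‖(ṽ^h)'‖_{L^∞} ≤ C h^{2(α−2)}, ‖y^h₁ − x₁ − ṽ^h(x₁)‖_{L²} ≤ C h^{α−1}, and ‖y^h₁ − x₁‖_{L²} ≤ C h^{2(α−2)}, one has for each n ∈ {1,…,n₀}: ‖ζ^h_n ∘ y^h₁ − x₁‖_{L²} ≤ C h^{α−1} + C h^{2(n₀−n+2)(α−2)}. In particular ‖ζ^h_1 ∘ y^h₁ − x₁‖_{L²}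 ≤ C h^{α−1} + C h^{2(n₀+1)(α−2)}, and the quantity h^{α−3}(h^{α−1} + h^{2(n₀+1)(α−2)}) tends to 0 as h → 0. -/
open MeasureTheory Filter

/-- The recursively defined maps: `zrec vt 0 = id - vt`,
`zrec vt (m+1) = id - vt ∘ (zrec vt m)`; with `ζ^h_n = zrec (ṽ^h) (n₀ - n)` this is the
iteration `ζ^h_{n₀}(t) = t - ṽ^h(t)`, `ζ^h_n(t) = t - ṽ^h(ζ^h_{n+1}(t))`. -/
def zrec (vt : ℝ → ℝ) : ℕ → ℝ → ℝ
  | 0 => fun t => t - vt t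
  | m + 1 => fun t => t - vt (zrec vt m t)

lemma my_lip {v : ℝ → ℝ} {L : ℝ} (hv : Differentiable ℝ v)
    (hd : ∀ t, |deriv v t| ≤ L) (a b : ℝ) : |v a - v b| ≤ L * |a - b| := by
  have := Convex.norm_image_sub_le_of_norm_deriv_le (f := v) (s := Set.univ) (C := L)
    (fun x _ => hv x) (fun x _ => hd x) convex_univ (Set.mem_univ b) (Set.mem_univ a)
  simpa [Real.norm_eq_abs] using this

lemma my_step {μ : Measure (ℝ × ℝ × ℝ)} {v : ℝ → ℝ} (hv : Differentiable ℝ v)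
    {L : ℝ} (hL : 0 ≤ L) (hvd : ∀ t, |deriv v t| ≤ L)
    {y w : ℝ × ℝ × ℝ → ℝ} (hy : AEStronglyMeasurable y μ) (hw : AEStronglyMeasurable w μ)
    {A M : ℝ} (hA0 : 0 ≤ A) (hM0 : 0 ≤ M)
    (hA : eLpNorm (fun x => y x - x.1 - v x.1) 2 μ ≤ ENNReal.ofReal A)
    (hM : eLpNorm (fun x => w x - x.1) 2 μ ≤ ENNReal.ofReal M) :
    eLpNorm (fun x => y x - v (w x) - x.1) 2 μ ≤ ENNReal.ofReal (A + L * M) := by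
  have hx1 : AEStronglyMeasurable (fun x : ℝ × ℝ × ℝ => x.1) μ :=
    (continuous_fst.aestronglyMeasurable)
  have hvx1 : AEStronglyMeasurable (fun x : ℝ × ℝ × ℝ => v x.1) μ :=
    (hv.continuous.comp continuous_fst).aestronglyMeasurable
  have hvw : AEStronglyMeasurable (fun x : ℝ × ℝ × ℝ => v (w x)) μ :=
    hv.continuous.comp_aestronglyMeasurable hw
  have heq : (fun x : ℝ × ℝ × ℝ => y x - v (w x) - x.1) =
      (fun x => (y x - x.1 - v x.1)) + (fun x => (v x.1 - v (w x))) := by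
    funext x; simp [Pi.add_apply]; ring
  rw [heq]
  have step1 : eLpNorm ((fun x : ℝ × ℝ × ℝ => (y x - x.1 - v x.1)) +
      (fun x => (v x.1 - v (w x)))) 2 μ ≤
      eLpNorm (fun x : ℝ × ℝ × ℝ => (y x - x.1 - v x.1)) 2 μ +
      eLpNorm (fun x : ℝ × ℝ × ℝ => (v x.1 - v (w x))) 2 μ :=
    eLpNorm_add_le ((hy.sub hx1).sub hvx1) (hvx1.sub hvw) one_le_two
  have step2 : eLpNorm (fun x : ℝ × ℝ × ℝ => (v x.1 - v (w x))) 2 μ ≤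
      ENNReal.ofReal L * ENNReal.ofReal M := by
    have hmono : eLpNorm (fun x : ℝ × ℝ × ℝ => (v x.1 - v (w x))) 2 μ ≤
        eLpNorm (L • fun x : ℝ × ℝ × ℝ => (w x - x.1)) 2 μ := by
      apply eLpNorm_mono
      intro x
      simp only [Pi.smul_apply, smul_eq_mul, Real.norm_eq_abs, abs_mul, abs_of_nonneg hL]
      calc |v x.1 - v (w x)| ≤ L * |x.1 - w x| := my_lip hv hvd _ _
        _ = L * |w x - x.1| := by rw [abs_sub_comm]
    refine hmono.trans ?_
    rw [eLpNorm_const_smul, Real.enorm_eq_ofReal hL]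
    exact mul_le_mul_right hM _
  refine (step1.trans (add_le_add hA step2)).trans ?_
  rw [ENNReal.ofReal_add hA0 (mul_nonneg hL hM0), ENNReal.ofReal_mul hL]

lemma my_arith0 {D X h2a : ℝ} (hD1 : 1 ≤ D) (hX0 : 0 ≤ X) (hh2a0 : 0 ≤ h2a) :
    D * X + D * h2a * (D * h2a) ≤ 2 * D * (2 * D) * (X + h2a * h2a) := by
  nlinarith [mul_nonneg (mul_nonneg (by linarith : (0:ℝ) ≤ D) (by linarith : (0:ℝ) ≤ 4*D - 1)) hX0,
    mul_nonneg (mul_nonneg (mul_nonneg (by linarith : (0:ℝ) ≤ D) (by linarith : (0:ℝ) ≤ 3*D)) hh2a0) hh2a0]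

lemma my_arith {D P X Y h2a : ℝ} (hD1 : 1 ≤ D) (hP : 1 ≤ P) (hX0 : 0 ≤ X)
    (hY0 : 0 ≤ Y) (hh2a0 : 0 ≤ h2a) (hh2a1 : h2a ≤ 1) :
    D * X + D * h2a * (P * (X + Y)) ≤ 2 * D * P * (X + h2a * Y) := by
  have h2aX : h2a * X ≤ X := mul_le_of_le_one_left hX0 hh2a1
  nlinarith [mul_nonneg (mul_nonneg (by linarith : (0:ℝ) ≤ D) (by linarith : (0:ℝ) ≤ P - 1)) hX0,
    mul_le_mul_of_nonneg_left h2aX (by positivity : (0:ℝ) ≤ D * P),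
    mul_nonneg (mul_nonneg (by positivity : (0:ℝ) ≤ D * P) hh2a0) hY0]

/-- The full iterated estimate: for every `n ∈ {1,…,n₀}` (i.e. `m = n₀ - n < n₀`),
`‖ζ^h_n ∘ y^h₁ - x₁‖_{L²} ≤ C(h^{α-1} + h^{2(n₀-n+2)(α-2)})`; in particular for `n = 1`,
and `h^{α-3}(h^{α-1} + h^{2(n₀+1)(α-2)}) → 0` as `h → 0⁺`. -/
theorem approximate_inverse_iterates
    (α : ℝ) (n₀ : ℕ) (hα : 2 < α ∧ α < 3) (hn₀ : 2 + 1 / (2 * (n₀ : ℝ) + 3) < α)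
    (C : ℝ) (hC : 0 < C)
    (Ω : Set (ℝ × ℝ × ℝ)) (hfin : volume Ω < ⊤)
    (y1 : ℝ → ℝ × ℝ × ℝ → ℝ) (vt : ℝ → ℝ → ℝ)
    (hy1 : ∀ h ∈ Set.Ioo (0 : ℝ) 1, AEStronglyMeasurable (y1 h) (volume.restrict Ω))
    (hvt : ∀ h ∈ Set.Ioo (0 : ℝ) 1, Differentiable ℝ (vt h))
    (hvtd : ∀ h ∈ Set.Ioo (0 : ℝ) 1, ∀ t, |deriv (vt h) t| ≤ C * h ^ (2 * (α - 2)))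
    (h1 : ∀ h ∈ Set.Ioo (0 : ℝ) 1,
      eLpNorm (fun x => y1 h x - x.1 - vt h x.1) 2 (volume.restrict Ω) ≤
        ENNReal.ofReal (C * h ^ (α - 1)))
    (h2 : ∀ h ∈ Set.Ioo (0 : ℝ) 1,
      eLpNorm (fun x => y1 h x - x.1) 2 (volume.restrict Ω) ≤
        ENNReal.ofReal (C * h ^ (2 * (α - 2)))) :
    (∃ C' : ℝ, 0 < C' ∧ ∀ h ∈ Set.Ioo (0 : ℝ) 1, ∀ m : ℕ, m < n₀ →
      eLpNorm (fun x => zrec (vt h) m (y1 h x) - x.1) 2 (volume.restrict Ω) ≤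
        ENNReal.ofReal (C' * (h ^ (α - 1) + h ^ (2 * ((m : ℝ) + 2) * (α - 2))))) ∧
    Tendsto (fun h : ℝ => h ^ (α - 3) * (h ^ (α - 1) + h ^ (2 * ((n₀ : ℝ) + 1) * (α - 2))))
      (nhdsWithin 0 (Set.Ioi (0 : ℝ))) (nhds 0) := by
  obtain ⟨hα2, hα3⟩ := hα
  set D : ℝ := C + 1 with hDdef
  have hD1 : 1 ≤ D := by linarith
  have hCD : C ≤ D := by linarith
  constructor
  · refine ⟨(2 * D) ^ (n₀ + 2), by positivity, ?_⟩
    intro h hmem m hm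
    obtain ⟨hh, hh1⟩ := hmem
    have hmem' : h ∈ Set.Ioo (0:ℝ) 1 := ⟨hh, hh1⟩
    set μ := volume.restrict Ω
    set X : ℝ := h ^ (α - 1) with hXdef
    set h2a : ℝ := h ^ (2 * (α - 2)) with h2adef
    have hX0 : 0 ≤ X := Real.rpow_nonneg hh.le _
    have hh2a0 : 0 ≤ h2a := Real.rpow_nonneg hh.le _
    have hh2a1 : h2a ≤ 1 := Real.rpow_le_one hh.le hh1.le (by nlinarith)
    have hv := hvt h hmem'
    have hvd' : ∀ t, |deriv (vt h) t| ≤ D * h2a := fun t =>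
      (hvtd h hmem' t).trans (by nlinarith)
    have hy := hy1 h hmem'
    have hA : eLpNorm (fun x => y1 h x - x.1 - vt h x.1) 2 μ ≤ ENNReal.ofReal (D * X) :=
      (h1 h hmem').trans (ENNReal.ofReal_le_ofReal (by nlinarith))
    have hM : eLpNorm (fun x => y1 h x - x.1) 2 μ ≤ ENNReal.ofReal (D * h2a) :=
      (h2 h hmem').trans (ENNReal.ofReal_le_ofReal (by nlinarith))
    have hLnn : 0 ≤ D * h2a := by positivity
    -- continuity and measurability of iterates
    have hcont : ∀ k : ℕ, Continuous (zrec (vt h) k) := by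
      intro k
      induction k with
      | zero => exact continuous_id.sub hv.continuous
      | succ k ih => exact continuous_id.sub (hv.continuous.comp ih)
    have hzm : ∀ k : ℕ, AEStronglyMeasurable (fun x => zrec (vt h) k (y1 h x)) μ :=
      fun k => (hcont k).comp_aestronglyMeasurable hy
    have hmul : ∀ t : ℝ, h2a * h ^ t = h ^ (2 * (α - 2) + t) := by
      intro t; rw [Real.rpow_add hh]
    -- the inductive claim
    have claim : ∀ k : ℕ,
        eLpNorm (fun x => zrec (vt h) k (y1 h x) - x.1) 2 μ ≤
          ENNReal.ofReal ((2 * D) ^ (k + 2) * (X + h ^ (2 * ((k : ℝ) + 2) * (α - 2)))) := by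
      intro k
      induction k with
      | zero =>
        have hstep := my_step hv hLnn hvd' hy hy (mul_nonneg (by linarith) hX0) hLnn hA hM
        have heq : (fun x : ℝ × ℝ × ℝ => zrec (vt h) 0 (y1 h x) - x.1) =
            (fun x => y1 h x - vt h (y1 h x) - x.1) := by funext x; simp [zrec]
        rw [heq]
        refine hstep.trans (ENNReal.ofReal_le_ofReal ?_)
        have hkey' : h2a * h2a = h ^ (2 * (((0:ℕ):ℝ) + 2) * (α - 2)) := by
          rw [h2adef, ← Real.rpow_add hh]; congr 1; push_cast; ring
        rw [← hkey', (show ((2:ℝ) * D) ^ (0 + 2) = 2 * D * (2 * D) by ring)]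
        exact my_arith0 hD1 hX0 hh2a0
      | succ k ih =>
        have hY0 : 0 ≤ h ^ (2 * ((k : ℝ) + 2) * (α - 2)) := Real.rpow_nonneg hh.le _
        have hMk : 0 ≤ (2 * D) ^ (k + 2) * (X + h ^ (2 * ((k : ℝ) + 2) * (α - 2))) := by positivity
        have hstep := my_step hv hLnn hvd' hy (hzm k)
          (mul_nonneg (by linarith) hX0) hMk hA ih
        have heq : (fun x : ℝ × ℝ × ℝ => zrec (vt h) (k + 1) (y1 h x) - x.1) =
            (fun x => y1 h x - vt h (zrec (vt h) k (y1 h x)) - x.1) := by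
          funext x; simp [zrec]
        rw [heq]
        refine hstep.trans (ENNReal.ofReal_le_ofReal ?_)
        set Y : ℝ := h ^ (2 * ((k : ℝ) + 2) * (α - 2)) with hYdef
        have hkey' : h2a * Y = h ^ (2 * ((((k:ℕ) + 1 : ℕ) : ℝ) + 2) * (α - 2)) := by
          rw [hYdef, h2adef, ← Real.rpow_add hh]; congr 1; push_cast; ring
        rw [← hkey', (show ((2:ℝ) * D) ^ (k + 1 + 2) = 2 * D * (2 * D) ^ (k + 2) by ring)]
        exact my_arith hD1 (one_le_pow₀ (by linarith)) hX0 hY0 hh2a0 hh2a1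
    -- conclude
    refine (claim m).trans (ENNReal.ofReal_le_ofReal ?_)
    have hY0 : 0 ≤ h ^ (2 * ((m : ℝ) + 2) * (α - 2)) := Real.rpow_nonneg hh.le _
    have hple : (2 * D : ℝ) ^ (m + 2) ≤ (2 * D) ^ (n₀ + 2) :=
      pow_le_pow_right₀ (by linarith) (by omega)
    exact mul_le_mul_of_nonneg_right hple (by positivity)
  · -- the limit
    set N : ℝ := (n₀ : ℝ) with hNdef
    have hN0 : (0:ℝ) ≤ N := Nat.cast_nonneg _
    have h3 : (0:ℝ) < 2 * N + 3 := by linarith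
    have hfrac : 1 / (2 * N + 3) < α - 2 := by linarith
    have hone : 1 < (α - 2) * (2 * N + 3) := by
      rw [div_lt_iff₀ h3] at hfrac; linarith
    have he1 : (0:ℝ) < (α - 3) + (α - 1) := by linarith
    have he2 : (0:ℝ) < (α - 3) + 2 * (N + 1) * (α - 2) := by nlinarith
    have t1 : ∀ e : ℝ, 0 < e →
        Tendsto (fun x : ℝ => x ^ e) (nhdsWithin 0 (Set.Ioi (0:ℝ))) (nhds 0) := by
      intro e he
      have hc := (Real.continuousAt_rpow_const 0 e (Or.inr he.le)).tendsto
      rw [Real.zero_rpow he.ne'] at hc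
      exact hc.mono_left nhdsWithin_le_nhds
    have hsum := (t1 _ he1).add (t1 _ he2)
    rw [add_zero] at hsum
    refine hsum.congr' ?_
    filter_upwards [self_mem_nhdsWithin] with x hx
    have hx0 : (0:ℝ) < x := hx
    rw [Real.rpow_add hx0 (α - 3) (α - 1), Real.rpow_add hx0 (α - 3) (2 * (N + 1) * (α - 2))]
    ring
end

section
/- Let S ⊂ ℝ² be a bounded Lipschitz domain and Ω = (0,L)×S. Suppose F ∈ L²(Ω; M^{3×3}) has symmetric values a.e. and satisfies ∫_Ω (F e₂ · ∂₂φ + F e₃ · ∂₃φ) dx = 0 for every φ ∈ C¹_b(ℝ³;ℝ³) with φ(0,x₂,x₃) = 0 for all (x₂,x₃). Then for a.e. x₁ ∈ (0,L), ∫_S F(x₁,·) e_k dx₂dx₃ = 0 for k = 2,3, and consequently the zeroth moment F̄(x₁) := ∫_S F(x₁,·) dx₂dx₃ has the form F̄ = F̄₁₁ e₁⊗e₁ a.e. in (0,L). -/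
open Matrix MeasureTheory

attribute [local instance] Matrix.normedAddCommGroup Matrix.normedSpace

/-! Auxiliary lemmas -/

lemma zms_chi_deriv (ρ : ℝ → ℝ) (hρ : Continuous ρ) (t : ℝ) :
    HasDerivAt (fun u => ∫ s in (0:ℝ)..u, ρ s) (ρ t) t :=
  intervalIntegral.integral_hasDerivAt_right (hρ.intervalIntegrable _ _)
    (hρ.stronglyMeasurable.stronglyMeasurableAtFilter) hρ.continuousAt

lemma zms_chi_bound (ρ : ℝ → ℝ) (hint : Integrable ρ) (hpos : ∀ s, 0 ≤ ρ s) (t : ℝ) :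
    |∫ s in (0:ℝ)..t, ρ s| ≤ ∫ s, ρ s := by
  rcases le_total 0 t with h | h
  · rw [intervalIntegral.integral_of_le h,
      abs_of_nonneg (setIntegral_nonneg measurableSet_Ioc fun s _ => hpos s)]
    exact setIntegral_le_integral hint (Filter.Eventually.of_forall hpos)
  · rw [intervalIntegral.integral_of_ge h, abs_neg,
      abs_of_nonneg (setIntegral_nonneg measurableSet_Ioc fun s _ => hpos s)]
    exact setIntegral_le_integral hint (Filter.Eventually.of_forall hpos)

lemma zms_chi_contDiff (ρ : ℝ → ℝ) (hρ : Continuous ρ) :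
    ContDiff ℝ 1 (fun u => ∫ s in (0:ℝ)..u, ρ s) := by
  rw [contDiff_one_iff_deriv]
  refine ⟨fun t => (zms_chi_deriv ρ hρ t).differentiableAt, ?_⟩
  have : deriv (fun u => ∫ s in (0:ℝ)..u, ρ s) = ρ := by
    ext t; exact (zms_chi_deriv ρ hρ t).deriv
  rw [this]; exact hρ

noncomputable def zmsD (g χ g' χ' : ℝ → ℝ) (i : Fin 3) (c : (ℝ × ℝ × ℝ) →L[ℝ] ℝ)
    (x : ℝ × ℝ × ℝ) : (ℝ × ℝ × ℝ) →L[ℝ] (Fin 3 → ℝ) :=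
  ((χ (c x) * g' x.1) • ContinuousLinearMap.fst ℝ ℝ (ℝ × ℝ)
    + (g x.1 * χ' (c x)) • c).smulRight (Pi.single i 1 : Fin 3 → ℝ)

noncomputable def zmsPhi (g χ : ℝ → ℝ) (i : Fin 3) (c : (ℝ × ℝ × ℝ) →L[ℝ] ℝ)
    (x : ℝ × ℝ × ℝ) : Fin 3 → ℝ :=
  (g x.1 * χ (c x)) • (Pi.single i 1 : Fin 3 → ℝ)

lemma zmsPhi_hasFDeriv (g χ g' χ' : ℝ → ℝ) (hg : ∀ t, HasDerivAt g (g' t) t)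
    (hχ : ∀ t, HasDerivAt χ (χ' t) t) (i : Fin 3) (c : (ℝ × ℝ × ℝ) →L[ℝ] ℝ)
    (x : ℝ × ℝ × ℝ) :
    HasFDerivAt (zmsPhi g χ i c) (zmsD g χ g' χ' i c x) x := by
  have h1 : HasFDerivAt (fun x : ℝ × ℝ × ℝ => g x.1)
      ((g' x.1) • ContinuousLinearMap.fst ℝ ℝ (ℝ × ℝ)) x :=
    (hg x.1).comp_hasFDerivAt x (hasFDerivAt_fst)
  have h2 : HasFDerivAt (fun x : ℝ × ℝ × ℝ => χ (c x)) ((χ' (c x)) • c) x :=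
    (hχ (c x)).comp_hasFDerivAt x (c.hasFDerivAt)
  have h3 := (h1.mul h2).smul_const (Pi.single i 1 : Fin 3 → ℝ)
  unfold zmsD
  refine h3.congr_fderiv ?_
  congr 1
  refine ContinuousLinearMap.ext fun (v : ℝ × ℝ × ℝ) => ?_
  simp only [ContinuousLinearMap.add_apply, ContinuousLinearMap.smul_apply,
    ContinuousLinearMap.coe_fst', smul_eq_mul]
  ring

lemma zmsPhi_contDiff (g χ : ℝ → ℝ) (hg : ContDiff ℝ 1 g) (hχ : ContDiff ℝ 1 χ)
    (i : Fin 3) (c : (ℝ × ℝ × ℝ) →L[ℝ] ℝ) : ContDiff ℝ 1 (zmsPhi g χ i c) :=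
  ((hg.comp contDiff_fst).mul (hχ.comp c.contDiff)).smul contDiff_const

lemma zms_norm_single (i : Fin 3) : ‖(Pi.single i 1 : Fin 3 → ℝ)‖ ≤ 1 := by
  refine (pi_norm_le_iff_of_nonneg zero_le_one).2 fun j => ?_
  rcases eq_or_ne j i with rfl | h
  · simp
  · simp [Pi.single_apply, h]

lemma zmsD_apply (g χ g' χ' : ℝ → ℝ) (i : Fin 3) (c : (ℝ × ℝ × ℝ) →L[ℝ] ℝ)
    (x v : ℝ × ℝ × ℝ) :
    zmsD g χ g' χ' i c x v
      = (χ (c x) * g' x.1 * v.1 + g x.1 * χ' (c x) * c v) • (Pi.single i 1 : Fin 3 → ℝ) := by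
  simp [zmsD, ContinuousLinearMap.smulRight_apply]

lemma zmsD_norm_le (g χ g' χ' : ℝ → ℝ) (i : Fin 3) (c : (ℝ × ℝ × ℝ) →L[ℝ] ℝ)
    (Mg Mg' Mχ Mχ' : ℝ) (hMg : ∀ t, |g t| ≤ Mg) (hMg' : ∀ t, |g' t| ≤ Mg')
    (hMχ : ∀ t, |χ t| ≤ Mχ) (hMχ' : ∀ t, |χ' t| ≤ Mχ')
    (hc : ∀ v : ℝ × ℝ × ℝ, |c v| ≤ ‖v‖) (x : ℝ × ℝ × ℝ) :
    ‖zmsD g χ g' χ' i c x‖ ≤ Mχ * Mg' + Mg * Mχ' := by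
  have h0g : 0 ≤ Mg := le_trans (abs_nonneg _) (hMg 0)
  have h0g' : 0 ≤ Mg' := le_trans (abs_nonneg _) (hMg' 0)
  have h0χ : 0 ≤ Mχ := le_trans (abs_nonneg _) (hMχ 0)
  have h0χ' : 0 ≤ Mχ' := le_trans (abs_nonneg _) (hMχ' 0)
  refine ContinuousLinearMap.opNorm_le_bound _ (by positivity) fun v => ?_
  rw [zmsD_apply, norm_smul]
  have hv1 : |v.1| ≤ ‖v‖ := by simpa using norm_fst_le v
  have e1 : |χ (c x) * g' x.1 * v.1| ≤ Mχ * Mg' * ‖v‖ := by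
    rw [abs_mul, abs_mul]
    exact mul_le_mul (mul_le_mul (hMχ _) (hMg' _) (abs_nonneg _) h0χ) hv1 (abs_nonneg _)
      (by positivity)
  have e2 : |g x.1 * χ' (c x) * c v| ≤ Mg * Mχ' * ‖v‖ := by
    rw [abs_mul, abs_mul]
    exact mul_le_mul (mul_le_mul (hMg _) (hMχ' _) (abs_nonneg _) h0g) (hc v) (abs_nonneg _)
      (by positivity)
  have e3 : ‖χ (c x) * g' x.1 * v.1 + g x.1 * χ' (c x) * c v‖
      ≤ (Mχ * Mg' + Mg * Mχ') * ‖v‖ := by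
    refine le_trans (abs_add_le _ _) ?_
    rw [add_mul]
    exact add_le_add e1 e2
  have e4 : ‖χ (c x) * g' x.1 * v.1 + g x.1 * χ' (c x) * c v‖ * ‖(Pi.single i 1 : Fin 3 → ℝ)‖
      ≤ ‖χ (c x) * g' x.1 * v.1 + g x.1 * χ' (c x) * c v‖ * 1 :=
    mul_le_mul_of_nonneg_left (zms_norm_single i) (norm_nonneg _)
  rw [mul_one] at e4
  exact le_trans e4 e3

set_option maxHeartbeats 2000000 in
/-- If a symmetric-valued `F ∈ L²(Ω; M³ˣ³)` on `Ω = (0,L)×S` satisfies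
`∫_Ω (F e₂ · ∂₂φ + F e₃ · ∂₃φ) = 0` for all `φ ∈ C¹_b` vanishing on `{x₁ = 0}`, then for
a.e. `x₁` the averages `∫_S F e₂ = ∫_S F e₃ = 0`, and the zeroth moment
`F̄(x₁) = ∫_S F(x₁,·)` has the form `F̄ = F̄₁₁ e₁⊗e₁`. -/
theorem zeroth_moment_structure
    (L : ℝ) (hL : 0 < L) (S : Set (ℝ × ℝ)) (hSopen : IsOpen S)
    (hSbdd : Bornology.IsBounded S)
    (F : ℝ × ℝ × ℝ → Matrix (Fin 3) (Fin 3) ℝ)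
    (hFL2 : MemLp F 2 (volume.restrict (Set.Ioo 0 L ×ˢ S)))
    (hFsym : ∀ᵐ x ∂(volume.restrict (Set.Ioo 0 L ×ˢ S)), (F x)ᵀ = F x)
    (hweak : ∀ φ : ℝ × ℝ × ℝ → Fin 3 → ℝ,
      ContDiff ℝ 1 φ →
      (∃ M : ℝ, ∀ x, ‖φ x‖ ≤ M ∧ ‖fderiv ℝ φ x‖ ≤ M) →
      (∀ p : ℝ × ℝ, φ (0, p) = 0) →
      (∫ x in Set.Ioo 0 L ×ˢ S,
        ((∑ i : Fin 3, F x i 1 * fderiv ℝ φ x (0, 1, 0) i) +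
          ∑ i : Fin 3, F x i 2 * fderiv ℝ φ x (0, 0, 1) i)) = 0) :
    ∀ᵐ x₁ ∂(volume.restrict (Set.Ioo 0 L)),
      (∀ i : Fin 3, (∫ p in S, F (x₁, p) i 1) = 0 ∧ (∫ p in S, F (x₁, p) i 2) = 0) ∧
      (Matrix.of fun i j => ∫ p in S, F (x₁, p) i j) =
        (∫ p in S, F (x₁, p) 0 0) • Matrix.single (0 : Fin 3) (0 : Fin 3) (1 : ℝ) := by
  classical
  -- radius bound for S
  obtain ⟨R₀, hSR₀⟩ := (Metric.isBounded_iff_subset_closedBall (0 : ℝ × ℝ)).1 hSbdd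
  set R : ℝ := max R₀ 0 with hRdef
  have hSR : ∀ p ∈ S, ‖p‖ ≤ R := fun p hp => by
    have := hSR₀ hp
    rw [Metric.mem_closedBall, dist_zero_right] at this
    exact this.trans (le_max_left _ _)
  -- bump function and its primitive
  set ρb : ContDiffBump (0:ℝ) := ⟨R + 1, R + 2, by positivity, by linarith⟩ with hρbdef
  set χ : ℝ → ℝ := fun u => ∫ s in (0:ℝ)..u, (ρb : ℝ → ℝ) s with hχdef
  have hρcont : Continuous (ρb : ℝ → ℝ) := ρb.continuous
  have hχd : ∀ t, HasDerivAt χ ((ρb : ℝ → ℝ) t) t := zms_chi_deriv _ hρcont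
  have hχC : ContDiff ℝ 1 χ := zms_chi_contDiff _ hρcont
  set Cχ : ℝ := ∫ s, (ρb : ℝ → ℝ) s with hCχdef
  have hχb : ∀ t, |χ t| ≤ Cχ :=
    zms_chi_bound _ ρb.integrable (fun s => ρb.nonneg) 
  have hρb1 : ∀ t, |(ρb : ℝ → ℝ) t| ≤ 1 := fun t => abs_le.2 ⟨by nlinarith [ρb.nonneg (x := t)], ρb.le_one⟩
  have hρ1 : ∀ t : ℝ, |t| ≤ R → (ρb : ℝ → ℝ) t = 1 := fun t ht =>
    ρb.one_of_mem_closedBall (by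
      rw [Metric.mem_closedBall, Real.dist_eq, sub_zero]
      have : ρb.rIn = R + 1 := rfl
      rw [this]
      linarith)
  -- measurability / integrability setup
  have hSm : MeasurableSet S := hSopen.measurableSet
  have hΩm : MeasurableSet (Set.Ioo 0 L ×ˢ S) := measurableSet_Ioo.prod hSm
  have hΩbdd : Bornology.IsBounded (Set.Ioo 0 L ×ˢ S) :=
    (Metric.isBounded_Ioo 0 L).prod hSbdd
  have hfin : IsFiniteMeasure (volume.restrict (Set.Ioo 0 L ×ˢ S)) :=
    ⟨by rw [Measure.restrict_apply_univ]; exact hΩbdd.measure_lt_top⟩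
  letI : ContinuousENorm (Matrix (Fin 3) (Fin 3) ℝ) :=
    @SeminormedAddGroup.toContinuousENorm _ inferInstance
  have hFint : Integrable F (volume.restrict (Set.Ioo 0 L ×ˢ S)) :=
    hFL2.integrable one_le_two
  have hentry : ∀ i j : Fin 3,
      Integrable (fun x => F x i j) (volume.restrict (Set.Ioo 0 L ×ˢ S)) := by
    intro i j
    refine hFint.norm.mono' ?_ ?_
    · exact (((continuous_apply j).comp (continuous_apply i)).comp_aestronglyMeasurable hFint.1)
    · exact Filter.Eventually.of_forall fun x => (F x).norm_entry_le_entrywise_sup_norm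
  -- product decomposition of the restricted measure
  have hprodm : volume.restrict (Set.Ioo 0 L ×ˢ S)
      = (volume.restrict (Set.Ioo 0 L)).prod (volume.restrict S) := by
    rw [Measure.volume_eq_prod, Measure.prod_restrict]
  -- key claim
  have key : ∀ (i k : Fin 3) (c : (ℝ × ℝ × ℝ) →L[ℝ] ℝ),
      (∀ v : ℝ × ℝ × ℝ, |c v| ≤ ‖v‖) →
      (∀ x : ℝ × ℝ × ℝ, x ∈ Set.Ioo 0 L ×ˢ S → |c x| ≤ R) →
      (∀ x : ℝ × ℝ × ℝ, F x i 1 * c (0,1,0) + F x i 2 * c (0,0,1) = F x i k) →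
      ∀ᵐ x₁ ∂(volume.restrict (Set.Ioo 0 L)), (∫ p in S, F (x₁, p) i k) = 0 := by
    intro i k c hc hcR hck
    have step1 : ∀ g : ℝ → ℝ, ContDiff ℝ (⊤ : ℕ∞) g → HasCompactSupport g →
        tsupport g ⊆ Set.Ioo 0 L →
        ∫ x in Set.Ioo 0 L ×ˢ S, g x.1 * F x i k = 0 := by
      intro g hgC hgsupp hgsub
      set g' : ℝ → ℝ := deriv g with hg'def
      have hg1 : ContDiff ℝ 1 g := hgC.of_le (by exact_mod_cast le_top)
      have hgd : ∀ t, HasDerivAt g (g' t) t := fun t =>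
        ((hg1.differentiable one_ne_zero).differentiableAt).hasDerivAt
      obtain ⟨Mg, hMg⟩ := hgsupp.exists_bound_of_continuous hg1.continuous
      obtain ⟨Mg', hMg'⟩ := (hgsupp.deriv).exists_bound_of_continuous (hg1.continuous_deriv le_rfl)
      set φ := zmsPhi g χ i c with hφdef
      have hφC : ContDiff ℝ 1 φ := zmsPhi_contDiff _ _ hg1 hχC i c
      have hfd : ∀ x, fderiv ℝ φ x = zmsD g χ g' (fun t => (ρb : ℝ → ℝ) t) i c x := fun x =>
        (zmsPhi_hasFDeriv g χ g' _ hgd hχd i c x).fderiv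
      have hMg0 : ∀ t, |g t| ≤ |Mg| := fun t => (hMg t).trans (le_abs_self _)
      have hMg'0 : ∀ t, |g' t| ≤ |Mg'| := fun t => (hMg' t).trans (le_abs_self _)
      have hχb0 : ∀ t, |χ t| ≤ |Cχ| := fun t => (hχb t).trans (le_abs_self _)
      have hbd : ∃ M : ℝ, ∀ x, ‖φ x‖ ≤ M ∧ ‖fderiv ℝ φ x‖ ≤ M := by
        refine ⟨max (|Mg| * |Cχ|) (|Cχ| * |Mg'| + |Mg| * 1), fun x => ⟨?_, ?_⟩⟩
        · refine le_trans ?_ (le_max_left _ _)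
          rw [hφdef]
          unfold zmsPhi
          rw [norm_smul]
          calc ‖g x.1 * χ (c x)‖ * ‖(Pi.single i 1 : Fin 3 → ℝ)‖
              ≤ ‖g x.1 * χ (c x)‖ * 1 :=
                mul_le_mul_of_nonneg_left (zms_norm_single i) (norm_nonneg _)
            _ = |g x.1 * χ (c x)| := mul_one _
            _ = |g x.1| * |χ (c x)| := abs_mul _ _
            _ ≤ |Mg| * |Cχ| := mul_le_mul (hMg0 _) (hχb0 _) (abs_nonneg _) (abs_nonneg _)
        · refine le_trans ?_ (le_max_right _ _)
          rw [hfd x]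
          exact zmsD_norm_le g χ g' _ i c (|Mg|) (|Mg'|) (|Cχ|) 1 hMg0 hMg'0 hχb0 hρb1 hc x
      have hzero : ∀ p : ℝ × ℝ, φ (0, p) = 0 := by
        intro p
        have hg0 : g 0 = 0 := image_eq_zero_of_notMem_tsupport fun h =>
          (lt_irrefl (0:ℝ)) (hgsub h).1
        rw [hφdef]; unfold zmsPhi; simp [hg0]
      have h0 := hweak φ hφC hbd hzero
      refine Eq.trans (setIntegral_congr_fun hΩm fun x hx => ?_) h0
      have hρ1x : (ρb : ℝ → ℝ) (c x) = 1 := hρ1 _ (hcR x hx)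
      have e1 : (fderiv ℝ φ x) ((0:ℝ), (1:ℝ), (0:ℝ))
          = (g x.1 * c (0,1,0)) • (Pi.single i 1 : Fin 3 → ℝ) := by
        rw [hfd x, zmsD_apply, hρ1x]; norm_num
      have e2 : (fderiv ℝ φ x) ((0:ℝ), (0:ℝ), (1:ℝ))
          = (g x.1 * c (0,0,1)) • (Pi.single i 1 : Fin 3 → ℝ) := by
        rw [hfd x, zmsD_apply, hρ1x]; norm_num
      rw [e1, e2]
      have esum : ∀ (k' : Fin 3) (a : ℝ), (∑ i' : Fin 3, F x i' k'
          * ((a • (Pi.single i 1 : Fin 3 → ℝ)) i')) = F x i k' * a := by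
        intro k' a
        rw [Finset.sum_eq_single i]
        · simp
        · intro b _ hb
          simp [Pi.single_apply, hb]
        · simp
      rw [esum, esum]
      rw [← hck x]
      ring
    -- Step 2: localize via the distribution lemma
    set H : ℝ → ℝ := fun x₁ => ∫ p in S, F (x₁, p) i k with hHdef
    have hprodint : Integrable (fun x : ℝ × (ℝ × ℝ) => F x i k)
        ((volume.restrict (Set.Ioo 0 L)).prod (volume.restrict S)) := by
      rw [← hprodm]; exact hentry i k
    have hHint : IntegrableOn H (Set.Ioo 0 L) volume := hprodint.integral_prod_left
    have hindint : IntegrableOn (Set.indicator (Set.Ioo 0 L) H) (Set.Ioo 0 L) volume :=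
      hHint.congr_fun (fun x hx => (Set.indicator_of_mem hx H).symm) measurableSet_Ioo
    have hae := isOpen_Ioo.ae_eq_zero_of_integral_contDiff_smul_eq_zero
      (f := Set.indicator (Set.Ioo 0 L) H) (μ := volume)
      hindint.locallyIntegrableOn ?_
    · rw [ae_restrict_iff' measurableSet_Ioo]
      filter_upwards [hae] with x₁ hx₁
      intro hmem
      have := hx₁ hmem
      rwa [Set.indicator_of_mem hmem] at this
    · intro g hgC hgsupp hgsub
      have hI : ∫ x, g x • Set.indicator (Set.Ioo 0 L) H x = ∫ x in Set.Ioo 0 L, g x * H x := by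
        rw [← integral_indicator measurableSet_Ioo]
        congr 1
        ext x
        by_cases hx : x ∈ Set.Ioo 0 L
        · rw [Set.indicator_of_mem hx, Set.indicator_of_mem hx, smul_eq_mul]
        · rw [Set.indicator_of_notMem hx, Set.indicator_of_notMem hx, smul_zero]
      rw [hI]
      obtain ⟨Mg, hMg⟩ := hgsupp.exists_bound_of_continuous hgC.continuous
      have hIO : Integrable (fun x : ℝ × (ℝ × ℝ) => g x.1 * F x i k)
          (volume.restrict (Set.Ioo 0 L ×ˢ S)) := by
        refine (hentry i k).bdd_mul (c := Mg) ?_ (Filter.Eventually.of_forall fun x => hMg x.1)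
        exact (hgC.continuous.comp continuous_fst).aestronglyMeasurable
      have hIO' : IntegrableOn (fun x : ℝ × (ℝ × ℝ) => g x.1 * F x i k)
          (Set.Ioo 0 L ×ˢ S) (volume.prod volume) := by
        rwa [← Measure.volume_eq_prod]
      have hFub := setIntegral_prod (μ := (volume : Measure ℝ)) (ν := (volume : Measure (ℝ × ℝ)))
        (fun x : ℝ × (ℝ × ℝ) => g x.1 * F x i k) hIO'
      have hstep := step1 g hgC hgsupp hgsub
      rw [show (volume : Measure (ℝ × (ℝ × ℝ))) = (volume.prod volume) from Measure.volume_eq_prod ℝ (ℝ × ℝ)] at hstep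
      rw [hFub] at hstep
      refine Eq.trans (integral_congr_ae (Filter.Eventually.of_forall fun x₁ => ?_)) hstep
      exact (integral_const_mul _ _).symm
  -- instantiate the key claim for the two columns
  set c2 : (ℝ × ℝ × ℝ) →L[ℝ] ℝ :=
    (ContinuousLinearMap.fst ℝ ℝ ℝ).comp (ContinuousLinearMap.snd ℝ ℝ (ℝ × ℝ)) with hc2def
  set c3 : (ℝ × ℝ × ℝ) →L[ℝ] ℝ :=
    (ContinuousLinearMap.snd ℝ ℝ ℝ).comp (ContinuousLinearMap.snd ℝ ℝ (ℝ × ℝ)) with hc3def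
  have hc2v : ∀ v : ℝ × ℝ × ℝ, c2 v = v.2.1 := fun v => rfl
  have hc3v : ∀ v : ℝ × ℝ × ℝ, c3 v = v.2.2 := fun v => rfl
  have K1 : ∀ i : Fin 3, ∀ᵐ x₁ ∂(volume.restrict (Set.Ioo 0 L)),
      (∫ p in S, F (x₁, p) i 1) = 0 := by
    intro i
    refine key i 1 c2 (fun v => ?_) (fun x hx => ?_) (fun x => by rw [hc2v, hc2v]; norm_num)
    · rw [hc2v]
      exact le_trans (by simpa using norm_fst_le v.2) (by simpa using norm_snd_le v)
    · rw [hc2v]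
      exact le_trans (by simpa using norm_fst_le x.2) (hSR x.2 hx.2)
  have K2 : ∀ i : Fin 3, ∀ᵐ x₁ ∂(volume.restrict (Set.Ioo 0 L)),
      (∫ p in S, F (x₁, p) i 2) = 0 := by
    intro i
    refine key i 2 c3 (fun v => ?_) (fun x hx => ?_) (fun x => by rw [hc3v, hc3v]; norm_num)
    · rw [hc3v]
      exact le_trans (by simpa using norm_snd_le v.2) (by simpa using norm_snd_le v)
    · rw [hc3v]
      exact le_trans (by simpa using norm_snd_le x.2) (hSR x.2 hx.2)
  -- symmetry of the slices
  have hsymm : ∀ᵐ x₁ ∂(volume.restrict (Set.Ioo 0 L)),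
      ∀ᵐ p ∂(volume.restrict S), (F (x₁, p))ᵀ = F (x₁, p) := by
    rw [hprodm] at hFsym
    exact Measure.ae_ae_of_ae_prod hFsym
  filter_upwards [ae_all_iff.2 K1, ae_all_iff.2 K2, hsymm] with x₁ h1 h2 hs
  have hsym' : ∀ a b : Fin 3, (∫ p in S, F (x₁, p) a b) = ∫ p in S, F (x₁, p) b a := by
    intro a b
    refine integral_congr_ae (hs.mono fun p hp => ?_)
    calc F (x₁, p) a b = (F (x₁, p))ᵀ b a := (Matrix.transpose_apply _ _ _).symm
      _ = F (x₁, p) b a := by rw [hp]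
  refine ⟨fun i => ⟨h1 i, h2 i⟩, ?_⟩
  have h10 : (∫ p in S, F (x₁, p) 1 0) = 0 := by rw [hsym' 1 0]; exact h1 0
  have h20 : (∫ p in S, F (x₁, p) 2 0) = 0 := by rw [hsym' 2 0]; exact h2 0
  ext i j
  rw [Matrix.of_apply, Matrix.smul_apply, Matrix.single, Matrix.of_apply, smul_eq_mul]
  fin_cases i <;> fin_cases j <;>
    simp only [Fin.zero_eta, Fin.mk_one, show (⟨2, by norm_num⟩ : Fin 3) = 2 from rfl]
  · norm_num
  · rw [h1 0]; norm_num
  · rw [h2 0]; simp [Fin.ext_iff]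
  · rw [h10]; norm_num
  · rw [h1 1]; norm_num
  · rw [h2 1]; simp [Fin.ext_iff]
  · rw [h20]; simp [Fin.ext_iff]
  · rw [h1 2]; norm_num
  · rw [h2 2]; simp [Fin.ext_iff]
end
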